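/- arXiv:1406.5140 — 11 statements merged into one kernel-verified Lean document; each statement's English description precedes it below -/
import Mathlib

section
/- Let p be a prime not dividing m+1, and let a, b ∈ E_p^{m+1}. Define F(z) = (∑_j a_j z_j)/(∑_j b_j z_j). Then for all z, t ∈ E_p^{m+1} we have |F(z) - F(t)|_p ≤ (1/p) · max_j |z_j - t_j|_p. -/
/-- `x ∈ E_p` : a unit with `|x - 1|_p < p^(-1/(p-1))`. -/
def IsEp (p : ℕ) [Fact p.Prime] (x : ℚ_[p]) : Prop :=
  ‖x‖ = 1 ∧ ‖x - 1‖ < (p : ℝ) ^ (-(1 : ℝ) / ((p : ℝ) - 1))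

lemma IsEp.sub_one_le {p : ℕ} [Fact p.Prime] {x : ℚ_[p]} (h : IsEp p x) :
    ‖x - 1‖ ≤ (p : ℝ)⁻¹ := by
  have hp1 : (1 : ℝ) < p := by exact_mod_cast (Fact.out : p.Prime).one_lt
  have h1 : ‖x - 1‖ < 1 := by
    refine h.2.trans_le ?_
    apply Real.rpow_le_one_of_one_le_of_nonpos hp1.le
    exact div_nonpos_iff.mpr (Or.inr ⟨by norm_num, by linarith⟩)
  have := (Padic.norm_le_pow_iff_norm_lt_pow_add_one (x - 1) (-1)).mpr
    (by simpa using h1)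
  simpa using this

lemma IsEp.mul_sub_one_le {p : ℕ} [Fact p.Prime] {x y : ℚ_[p]} (hx : IsEp p x)
    (hy : IsEp p y) : ‖x * y - 1‖ ≤ (p : ℝ)⁻¹ := by
  have : x * y - 1 = x * (y - 1) + (x - 1) := by ring
  rw [this]
  refine (Padic.nonarchimedean _ _).trans (max_le ?_ hx.sub_one_le)
  rw [norm_mul, hx.1, one_mul]
  exact hy.sub_one_le

lemma denom_norm {p : ℕ} [Fact p.Prime] {m : ℕ} (hpm : ¬ p ∣ (m + 1))
    (b z : Fin (m + 1) → ℚ_[p]) (hb : ∀ j, IsEp p (b j)) (hz : ∀ j, IsEp p (z j)) :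
    ‖∑ j, b j * z j‖ = 1 := by
  have hp1 : (1 : ℝ) < p := by exact_mod_cast (Fact.out : p.Prime).one_lt
  have hm : ‖((m + 1 : ℕ) : ℚ_[p])‖ = 1 := by
    refine le_antisymm (by exact_mod_cast Padic.norm_int_le_one ((m+1 : ℕ) : ℤ)) ?_
    by_contra h
    push_neg at h
    have := (Padic.norm_intCast_lt_one_iff (k := ((m+1 : ℕ) : ℤ))).mp (by exact_mod_cast h)
    exact hpm (by exact_mod_cast this)
  have hsmall : ‖∑ j, (b j * z j - 1)‖ ≤ (p : ℝ)⁻¹ :=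
    IsUltrametricDist.norm_sum_le_of_forall_le_of_nonneg (by positivity)
      fun j _ => (hb j).mul_sub_one_le (hz j)
  have heq : ∑ j, b j * z j = ((m + 1 : ℕ) : ℚ_[p]) + ∑ j, (b j * z j - 1) := by
    rw [Finset.sum_sub_distrib]
    simp [Finset.card_univ]
  have hne : ‖((m + 1 : ℕ) : ℚ_[p])‖ ≠ ‖∑ j, (b j * z j - 1)‖ := by
    rw [hm]
    intro h
    have : (p:ℝ)⁻¹ < 1 := by rw [inv_lt_one_iff₀]; right; exact hp1
    rw [← h] at hsmall
    linarith
  rw [heq, Padic.add_eq_max_of_ne hne, hm,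
    max_eq_left (hsmall.trans (by rw [inv_le_one_iff₀]; right; exact hp1.le))]

theorem F_contraction (p : ℕ) [Fact p.Prime] (m : ℕ) (hpm : ¬ p ∣ (m + 1))
    (a b : Fin (m + 1) → ℚ_[p])
    (ha : ∀ j, IsEp p (a j)) (hb : ∀ j, IsEp p (b j))
    (z t : Fin (m + 1) → ℚ_[p])
    (hz : ∀ j, IsEp p (z j)) (ht : ∀ j, IsEp p (t j)) :
    ‖(∑ j, a j * z j) / (∑ j, b j * z j) -
      (∑ j, a j * t j) / (∑ j, b j * t j)‖ ≤
      (1 / p) * (Finset.univ.sup' Finset.univ_nonempty fun j => ‖z j - t j‖) := by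
  set M := Finset.univ.sup' Finset.univ_nonempty fun j => ‖z j - t j‖ with hMdef
  have hMle : ∀ j, ‖z j - t j‖ ≤ M := fun j =>
    hMdef ▸ Finset.le_sup' (fun j => ‖z j - t j‖) (Finset.mem_univ j)
  have hMnn : 0 ≤ M := (norm_nonneg _).trans (hMle 0)
  have hB : ‖∑ j, b j * z j‖ = 1 := denom_norm hpm b z hb hz
  have hB' : ‖∑ j, b j * t j‖ = 1 := denom_norm hpm b t hb ht
  have hB0 : (∑ j, b j * z j) ≠ 0 := fun h => by rw [h] at hB; simp at hB
  have hB'0 : (∑ j, b j * t j) ≠ 0 := fun h => by rw [h] at hB'; simp at hB'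
  have hzero : ∑ j, ∑ k, (z j * t k - t j * z k) = 0 := by
    simp only [Finset.sum_sub_distrib, ← Finset.sum_mul_sum]
    ring
  have key : (∑ j, a j * z j) * (∑ j, b j * t j) - (∑ j, a j * t j) * (∑ j, b j * z j)
      = (∑ j, ∑ k, (a j * b k - 1) * (z j * t k - t j * z k))
        + ∑ j, ∑ k, (z j * t k - t j * z k) := by
    rw [Finset.sum_mul_sum, Finset.sum_mul_sum, ← Finset.sum_add_distrib,
      ← Finset.sum_sub_distrib]
    refine Finset.sum_congr rfl fun j _ => ?_
    rw [← Finset.sum_add_distrib, ← Finset.sum_sub_distrib]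
    exact Finset.sum_congr rfl fun k _ => by ring
  have hterm : ∀ j k : Fin (m + 1),
      ‖(a j * b k - 1) * (z j * t k - t j * z k)‖ ≤ (p : ℝ)⁻¹ * M := by
    intro j k
    rw [norm_mul]
    refine mul_le_mul ((ha j).mul_sub_one_le (hb k)) ?_ (norm_nonneg _) (by positivity)
    have e : z j * t k - t j * z k = t k * (z j - t j) + (-(t j)) * (z k - t k) := by ring
    rw [e]
    refine (Padic.nonarchimedean _ _).trans (max_le ?_ ?_)
    · rw [norm_mul, (ht k).1, one_mul]; exact hMle j
    · rw [norm_mul, norm_neg, (ht j).1, one_mul]; exact hMle k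
  have hsum : ‖(∑ j, a j * z j) * (∑ j, b j * t j)
      - (∑ j, a j * t j) * (∑ j, b j * z j)‖ ≤ (p : ℝ)⁻¹ * M := by
    rw [key, hzero, add_zero]
    refine IsUltrametricDist.norm_sum_le_of_forall_le_of_nonneg
      (mul_nonneg (by positivity) hMnn) fun j _ =>
      IsUltrametricDist.norm_sum_le_of_forall_le_of_nonneg
        (mul_nonneg (by positivity) hMnn) fun k _ => hterm j k
  rw [div_sub_div _ _ hB0 hB'0, norm_div, norm_mul, hB, hB', mul_one, div_one,
    one_div, mul_comm (∑ j, b j * z j)]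
  exact hsum
end

section
/- Let p be a prime not dividing m+1, let n ≥ 1, and for each s = 1,...,n let F_s(z) = (∑_j a^{(s)}_j z_j)/(∑_j b^{(s)}_j z_j) with a^{(s)}, b^{(s)} ∈ E_p^{m+1}. Then for sequences z^{(1)},...,z^{(n)} and t^{(1)},...,t^{(n)} in E_p^{m+1}: |∏_{s=1}^n F_s(z^{(s)}) - ∏_{s=1}^n F_s(t^{(s)})|_p ≤ (1/p) max_{1≤s≤n} max_j |z^{(s)}_j - t^{(s)}_j|_p. -/
section aux

variable {p : ℕ} [Fact p.Prime]

lemma padic_sum_norm_le {ι : Type*} (s : Finset ι) (f : ι → ℚ_[p]) {C : ℝ}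
    (hC : 0 ≤ C) (h : ∀ i ∈ s, ‖f i‖ ≤ C) : ‖∑ i ∈ s, f i‖ ≤ C := by
  classical
  induction s using Finset.induction_on with
  | empty => simpa using hC
  | @insert i s hni ih =>
    rw [Finset.sum_insert hni]
    exact le_trans (Padic.nonarchimedean _ _)
      (max_le (h _ (Finset.mem_insert_self _ _))
        (ih fun j hj => h j (Finset.mem_insert_of_mem hj)))

lemma IsEp.norm_sub_one_le {x : ℚ_[p]} (h : IsEp p x) : ‖x - 1‖ ≤ 1 / p := by
  have hp1 : (1 : ℝ) < p := by exact_mod_cast (Fact.out : p.Prime).one_lt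
  have hlt1 : ‖x - 1‖ < 1 := by
    refine lt_trans h.2 ?_
    apply Real.rpow_lt_one_of_one_lt_of_neg hp1
    have : (0 : ℝ) < (p : ℝ) - 1 := by linarith
    rw [div_neg_iff]
    right
    constructor <;> linarith
  have := (Padic.norm_le_pow_iff_norm_lt_pow_add_one (x - 1) (-1)).mpr (by
    simpa using hlt1)
  simpa [zpow_neg, one_div] using this

lemma IsEp.mul_norm_sub_one_le {x y : ℚ_[p]} (hx : IsEp p x) (hy : IsEp p y) :
    ‖x * y - 1‖ ≤ 1 / p := by
  have : x * y - 1 = x * (y - 1) + (x - 1) := by ring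
  rw [this]
  refine le_trans (Padic.nonarchimedean _ _) (max_le ?_ hx.norm_sub_one_le)
  rw [Padic.padicNormE.mul, hx.1, one_mul]
  exact hy.norm_sub_one_le

lemma padic_one_div_p_lt_one : (1 / (p : ℝ)) < 1 := by
  have hp1 : (1 : ℝ) < p := by exact_mod_cast (Fact.out : p.Prime).one_lt
  rw [div_lt_one (by linarith)]; exact hp1

/-- If each `x j` is within `1/p` of `1` and `p ∤ m+1`, the sum has norm `1`. -/
lemma padic_sum_norm_eq_one {m : ℕ} (hpm : ¬ p ∣ (m + 1)) (x : Fin (m + 1) → ℚ_[p])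
    (h : ∀ j, ‖x j - 1‖ ≤ 1 / p) : ‖∑ j, x j‖ = 1 := by
  have hm : ‖((m + 1 : ℤ) : ℚ_[p])‖ = 1 := by
    refine le_antisymm (Padic.norm_int_le_one _) (not_lt.mp fun hlt => hpm ?_)
    exact_mod_cast (Padic.norm_intCast_lt_one_iff (k := (m + 1 : ℤ))).mp hlt
  have hrw : ∑ j, x j = ((m + 1 : ℤ) : ℚ_[p]) + ∑ j, (x j - 1) := by
    rw [Finset.sum_sub_distrib, Finset.sum_const, Finset.card_univ, Fintype.card_fin]
    push_cast
    ring
  have hB : ‖∑ j, (x j - 1)‖ ≤ 1 / p :=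
    padic_sum_norm_le _ _ (by positivity) (fun j _ => h j)
  have hne : ‖((m + 1 : ℤ) : ℚ_[p])‖ ≠ ‖∑ j, (x j - 1)‖ := by
    rw [hm]
    intro heq
    rw [← heq] at hB
    linarith [padic_one_div_p_lt_one (p := p)]
  rw [hrw, Padic.add_eq_max_of_ne hne, hm]
  rw [max_eq_left (le_trans hB padic_one_div_p_lt_one.le)]

lemma padic_prod_sub_prod_le {ι : Type*} (s : Finset ι) (x y : ι → ℚ_[p]) {C : ℝ}
    (hC : 0 ≤ C) (hx : ∀ i, ‖x i‖ ≤ 1) (hy : ∀ i, ‖y i‖ ≤ 1)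
    (hd : ∀ i, ‖x i - y i‖ ≤ C) :
    ‖(∏ i ∈ s, x i) - ∏ i ∈ s, y i‖ ≤ C := by
  classical
  induction s using Finset.induction_on with
  | empty => simpa using hC
  | @insert i s hni ih =>
    rw [Finset.prod_insert hni, Finset.prod_insert hni]
    have key : x i * ∏ j ∈ s, x j - y i * ∏ j ∈ s, y j
        = x i * ((∏ j ∈ s, x j) - ∏ j ∈ s, y j) + (x i - y i) * ∏ j ∈ s, y j := by
      ring
    rw [key]
    refine le_trans (Padic.nonarchimedean _ _) (max_le ?_ ?_)
    · rw [Padic.padicNormE.mul]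
      calc ‖x i‖ * ‖(∏ j ∈ s, x j) - ∏ j ∈ s, y j‖ ≤ 1 * C :=
            mul_le_mul (hx i) ih (norm_nonneg _) zero_le_one
        _ = C := one_mul C
    · rw [Padic.padicNormE.mul]
      have hprod : ‖∏ j ∈ s, y j‖ ≤ 1 := by
        rw [norm_prod]
        exact Finset.prod_le_one (fun j _ => norm_nonneg _) (fun j _ => hy j)
      calc ‖x i - y i‖ * ‖∏ j ∈ s, y j‖ ≤ C * 1 :=
            mul_le_mul (hd i) hprod (norm_nonneg _) hC
        _ = C := mul_one C

end aux

theorem prod_F_contraction (p : ℕ) [Fact p.Prime] (m : ℕ) (hpm : ¬ p ∣ (m + 1))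
    (n : ℕ) [NeZero n]
    (a b : Fin n → Fin (m + 1) → ℚ_[p])
    (ha : ∀ s j, IsEp p (a s j)) (hb : ∀ s j, IsEp p (b s j))
    (z t : Fin n → Fin (m + 1) → ℚ_[p])
    (hz : ∀ s j, IsEp p (z s j)) (ht : ∀ s j, IsEp p (t s j)) :
    ‖(∏ s, (∑ j, a s j * z s j) / (∑ j, b s j * z s j)) -
      (∏ s, (∑ j, a s j * t s j) / (∑ j, b s j * t s j))‖ ≤
      (1 / p) * (Finset.univ.sup' Finset.univ_nonempty fun s : Fin n =>
        Finset.univ.sup' Finset.univ_nonempty fun j => ‖z s j - t s j‖) := by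
  set Δ : ℝ := Finset.univ.sup' Finset.univ_nonempty fun s : Fin n =>
        Finset.univ.sup' Finset.univ_nonempty fun j => ‖z s j - t s j‖ with hΔ
  have hΔ_le : ∀ s j, ‖z s j - t s j‖ ≤ Δ := fun s j =>
    le_trans (Finset.le_sup' (fun j => ‖z s j - t s j‖) (Finset.mem_univ j))
      (Finset.le_sup' (fun s => Finset.univ.sup' Finset.univ_nonempty
        fun j => ‖z s j - t s j‖) (Finset.mem_univ s))
  have hΔ0 : 0 ≤ Δ :=
    le_trans (norm_nonneg _) (hΔ_le ⟨0, Nat.pos_of_ne_zero (NeZero.ne n)⟩ 0)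
  have hC0 : 0 ≤ (1 / (p : ℝ)) * Δ := by positivity
  -- norms of numerators and denominators
  have hNz : ∀ s, ‖∑ j, a s j * z s j‖ = 1 := fun s =>
    padic_sum_norm_eq_one hpm _ (fun j => (ha s j).mul_norm_sub_one_le (hz s j))
  have hNt : ∀ s, ‖∑ j, a s j * t s j‖ = 1 := fun s =>
    padic_sum_norm_eq_one hpm _ (fun j => (ha s j).mul_norm_sub_one_le (ht s j))
  have hDz : ∀ s, ‖∑ j, b s j * z s j‖ = 1 := fun s =>
    padic_sum_norm_eq_one hpm _ (fun j => (hb s j).mul_norm_sub_one_le (hz s j))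
  have hDt : ∀ s, ‖∑ j, b s j * t s j‖ = 1 := fun s =>
    padic_sum_norm_eq_one hpm _ (fun j => (hb s j).mul_norm_sub_one_le (ht s j))
  have hDz0 : ∀ s, (∑ j, b s j * z s j) ≠ 0 := fun s h => by
    have := hDz s; rw [h, norm_zero] at this; exact zero_ne_one this
  have hDt0 : ∀ s, (∑ j, b s j * t s j) ≠ 0 := fun s h => by
    have := hDt s; rw [h, norm_zero] at this; exact zero_ne_one this
  -- per-factor contraction
  have factor : ∀ s : Fin n,
      ‖(∑ j, a s j * z s j) / (∑ j, b s j * z s j)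
        - (∑ j, a s j * t s j) / (∑ j, b s j * t s j)‖ ≤ (1 / p) * Δ := by
    intro s
    rw [div_sub_div _ _ (hDz0 s) (hDt0 s)]
    have key : (∑ j, a s j * z s j) * (∑ j, b s j * t s j)
        - (∑ j, b s j * z s j) * (∑ j, a s j * t s j)
        = ∑ j, ∑ k, (a s j * b s k - 1) * (z s j * t s k - t s j * z s k) := by
      rw [Finset.sum_mul_sum, Finset.sum_mul_sum]
      rw [Finset.sum_comm (f := fun j k => (b s j * z s j) * (a s k * t s k))]
      rw [← Finset.sum_sub_distrib]
      simp only [← Finset.sum_sub_distrib]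
      have hzero : ∑ j : Fin (m+1), ∑ k : Fin (m+1), (z s j * t s k - t s j * z s k) = 0 := by
        simp only [Finset.sum_sub_distrib, ← Finset.mul_sum, ← Finset.sum_mul]
        ring
      calc (∑ j, ∑ k, ((a s j * z s j) * (b s k * t s k) - (b s k * z s k) * (a s j * t s j)))
          = (∑ j, ∑ k, ((a s j * b s k - 1) * (z s j * t s k - t s j * z s k)
              + (z s j * t s k - t s j * z s k))) := by
            apply Finset.sum_congr rfl; intro j _
            apply Finset.sum_congr rfl; intro k _
            ring
        _ = ∑ j, ∑ k, (a s j * b s k - 1) * (z s j * t s k - t s j * z s k) := by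
            simp only [Finset.sum_add_distrib, hzero, add_zero]
    rw [key]
    have hterm : ∀ j k : Fin (m + 1),
        ‖(a s j * b s k - 1) * (z s j * t s k - t s j * z s k)‖ ≤ (1 / p) * Δ := by
      intro j k
      rw [Padic.padicNormE.mul]
      refine mul_le_mul ((ha s j).mul_norm_sub_one_le (hb s k)) ?_ (norm_nonneg _)
        (by positivity)
      have hrw : z s j * t s k - t s j * z s k
          = (z s j - t s j) * t s k - t s j * (z s k - t s k) := by ring
      rw [hrw, sub_eq_add_neg]
      refine le_trans (Padic.nonarchimedean _ _) (max_le ?_ ?_)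
      · rw [Padic.padicNormE.mul, (ht s k).1, mul_one]; exact hΔ_le s j
      · rw [norm_neg, Padic.padicNormE.mul, (ht s j).1, one_mul]; exact hΔ_le s k
    have hsum : ‖∑ j, ∑ k, (a s j * b s k - 1) * (z s j * t s k - t s j * z s k)‖
        ≤ (1 / p) * Δ := by
      refine padic_sum_norm_le _ _ hC0 (fun j _ => ?_)
      exact padic_sum_norm_le _ _ hC0 (fun k _ => hterm j k)
    calc ‖(∑ j, ∑ k, (a s j * b s k - 1) * (z s j * t s k - t s j * z s k))
          / ((∑ j, b s j * z s j) * (∑ j, b s j * t s j))‖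
        = ‖∑ j, ∑ k, (a s j * b s k - 1) * (z s j * t s k - t s j * z s k)‖ := by
          rw [norm_div, Padic.padicNormE.mul, hDz s, hDt s, one_mul, div_one]
      _ ≤ (1 / p) * Δ := hsum
  -- factor norms ≤ 1
  have hfz : ∀ s : Fin n, ‖(∑ j, a s j * z s j) / (∑ j, b s j * z s j)‖ ≤ 1 := by
    intro s; rw [norm_div, hNz s, hDz s]; norm_num
  have hft : ∀ s : Fin n, ‖(∑ j, a s j * t s j) / (∑ j, b s j * t s j)‖ ≤ 1 := by
    intro s; rw [norm_div, hNt s, hDt s]; norm_num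
  exact padic_prod_sub_prod_le Finset.univ _ _ hC0 hfz hft factor
end

section
/- Let p ≠ 3 be a prime, k ≥ 1, and a ∈ E_p. Define f(x) = ((2a + x)/(a² + ax + 1))^k. Then f maps E_p into E_p, i.e., for every x ∈ E_p, |f(x)|_p = 1 and |f(x) - 1|_p < p^(-1/(p-1)). -/
private lemma pow_sub_one_norm {p : ℕ} [Fact p.Prime] (y : ℚ_[p]) (hy : ‖y‖ = 1) :
    ∀ n : ℕ, ‖y ^ n - 1‖ ≤ ‖y - 1‖ := by
  intro n
  induction n with
  | zero => simp
  | succ n ih =>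
    have : y ^ (n + 1) - 1 = y ^ n * (y - 1) + (y ^ n - 1) := by ring
    rw [this]
    refine le_trans (Padic.nonarchimedean _ _) (max_le ?_ ih)
    rw [norm_mul, norm_pow, hy, one_pow, one_mul]

theorem f_maps_Ep_to_Ep (p : ℕ) [Fact p.Prime] (hp3 : p ≠ 3) (k : ℕ) (hk : 1 ≤ k)
    (a : ℚ_[p]) (ha : IsEp p a) (x : ℚ_[p]) (hx : IsEp p x) :
    IsEp p (((2 * a + x) / (a ^ 2 + a * x + 1)) ^ k) := by
  obtain ⟨ha1, ha2⟩ := ha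
  obtain ⟨hx1, hx2⟩ := hx
  set r : ℝ := (p : ℝ) ^ (-(1 : ℝ) / ((p : ℝ) - 1)) with hr
  have hp : p.Prime := Fact.out
  have hp1 : (1 : ℝ) < (p : ℝ) := by exact_mod_cast hp.one_lt
  have hrlt1 : r < 1 := by
    apply Real.rpow_lt_one_of_one_lt_of_neg hp1
    apply div_neg_of_neg_of_pos (by norm_num)
    linarith
  have h3 : ‖(3 : ℚ_[p])‖ = 1 := by
    have hle : ‖((3 : ℤ) : ℚ_[p])‖ ≤ 1 := Padic.norm_int_le_one 3
    have hnotlt : ¬ ‖((3 : ℤ) : ℚ_[p])‖ < 1 := by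
      rw [Padic.norm_intCast_lt_one_iff]
      intro h
      exact hp3 ((Nat.prime_dvd_prime_iff_eq hp (by norm_num)).mp (by exact_mod_cast h))
    push_cast at hle hnotlt
    linarith [lt_or_eq_of_le hle]
  have h2 : ‖(2 : ℚ_[p])‖ ≤ 1 := by
    have := Padic.norm_int_le_one (p := p) 2
    push_cast at this; exact this
  -- numerator
  have hu3 : ‖(2 * a + x) - 3‖ < r := by
    have : (2 * a + x) - 3 = 2 * (a - 1) + (x - 1) := by ring
    rw [this]
    refine lt_of_le_of_lt (Padic.nonarchimedean _ _) (max_lt ?_ hx2)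
    calc ‖2 * (a - 1)‖ = ‖(2 : ℚ_[p])‖ * ‖a - 1‖ := norm_mul _ _
      _ ≤ 1 * ‖a - 1‖ := by
          exact mul_le_mul_of_nonneg_right h2 (norm_nonneg _)
      _ < r := by rwa [one_mul]
  have hu : ‖2 * a + x‖ = 1 := by
    have hne : ‖(2 * a + x) - 3‖ ≠ ‖(3 : ℚ_[p])‖ := by
      rw [h3]; exact ne_of_lt (hu3.trans hrlt1)
    have : 2 * a + x = ((2 * a + x) - 3) + 3 := by ring
    rw [this, Padic.add_eq_max_of_ne hne, h3,
      max_eq_right (le_of_lt (hu3.trans hrlt1))]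
  -- denominator
  have hv3 : ‖(a ^ 2 + a * x + 1) - 3‖ < r := by
    have : (a ^ 2 + a * x + 1) - 3 = (a - 1) * (a + 1) + (a * (x - 1) + (a - 1)) := by ring
    rw [this]
    refine lt_of_le_of_lt (Padic.nonarchimedean _ _) (max_lt ?_ ?_)
    · calc ‖(a - 1) * (a + 1)‖ = ‖a - 1‖ * ‖a + 1‖ := norm_mul _ _
        _ ≤ ‖a - 1‖ * 1 := by
            refine mul_le_mul_of_nonneg_left ?_ (norm_nonneg _)
            calc ‖a + 1‖ ≤ max ‖a‖ ‖(1 : ℚ_[p])‖ := Padic.nonarchimedean _ _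
              _ = 1 := by rw [ha1, norm_one, max_self]
        _ < r := by rwa [mul_one]
    · refine lt_of_le_of_lt (Padic.nonarchimedean _ _) (max_lt ?_ ha2)
      rw [norm_mul, ha1, one_mul]; exact hx2
  have hv : ‖a ^ 2 + a * x + 1‖ = 1 := by
    have hne : ‖(a ^ 2 + a * x + 1) - 3‖ ≠ ‖(3 : ℚ_[p])‖ := by
      rw [h3]; exact ne_of_lt (hv3.trans hrlt1)
    have : a ^ 2 + a * x + 1 = ((a ^ 2 + a * x + 1) - 3) + 3 := by ring
    rw [this, Padic.add_eq_max_of_ne hne, h3,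
      max_eq_right (le_of_lt (hv3.trans hrlt1))]
  have hvne : (a ^ 2 + a * x + 1) ≠ 0 := by
    intro h; rw [h, norm_zero] at hv; norm_num at hv
  set y : ℚ_[p] := (2 * a + x) / (a ^ 2 + a * x + 1) with hy
  have hy1 : ‖y‖ = 1 := by rw [hy, norm_div, hu, hv, div_one]
  have hy2 : ‖y - 1‖ < r := by
    have : y - 1 = ((2 * a + x) - (a ^ 2 + a * x + 1)) / (a ^ 2 + a * x + 1) := by
      rw [hy, div_sub_one hvne]
    rw [this, norm_div, hv, div_one]
    have heq : (2 * a + x) - (a ^ 2 + a * x + 1) = -((a - 1) * ((a - 1) + x)) := by ring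
    rw [heq, norm_neg, norm_mul]
    calc ‖a - 1‖ * ‖(a - 1) + x‖ ≤ ‖a - 1‖ * 1 := by
          refine mul_le_mul_of_nonneg_left ?_ (norm_nonneg _)
          refine le_trans (Padic.nonarchimedean _ _) (max_le ?_ (le_of_eq hx1))
          exact le_of_lt (ha2.trans hrlt1)
      _ < r := by rwa [mul_one]
  exact ⟨by rw [norm_pow, hy1, one_pow],
    lt_of_le_of_lt (pow_sub_one_norm y hy1 k) hy2⟩
end

section
/- Let p ≠ 3 be a prime, k ≥ 1, and a ∈ E_p. Define f(x) = ((2a + x)/(a² + ax + 1))^k. Then for all x, y ∈ E_p: |f(x) - f(y)|_p ≤ (1/p)|x - y|_p. -/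
lemma IsEp.norm_sub_one_le_s8 {p : ℕ} [Fact p.Prime] {x : ℚ_[p]} (hx : IsEp p x) :
    ‖x - 1‖ ≤ (p : ℝ)⁻¹ := by
  have hp : (1 : ℝ) < p := by exact_mod_cast (Fact.out : p.Prime).one_lt
  have h1 : (p : ℝ) ^ (-(1 : ℝ) / ((p : ℝ) - 1)) ≤ 1 := by
    apply Real.rpow_le_one_of_one_le_of_nonpos (le_of_lt hp)
    apply div_nonpos_of_nonpos_of_nonneg <;> linarith
  have hlt : ‖x - 1‖ < 1 := lt_of_lt_of_le hx.2 h1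
  have := (Padic.norm_le_pow_iff_norm_lt_pow_add_one (x - 1) (-1)).2
  simpa using this (by simpa using hlt)

lemma pow_contract {p : ℕ} [Fact p.Prime] {u v : ℚ_[p]} {C : ℝ} (hC : 0 ≤ C)
    (hu : ‖u‖ ≤ 1) (hv : ‖v‖ ≤ 1) (huv : ‖u - v‖ ≤ C) (k : ℕ) :
    ‖u ^ k - v ^ k‖ ≤ C := by
  induction k with
  | zero => simpa using hC
  | succ n ih =>
    have key : u ^ (n + 1) - v ^ (n + 1) = u ^ n * (u - v) + v * (u ^ n - v ^ n) := by
      ring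
    rw [key]
    refine le_trans (Padic.nonarchimedean _ _) (max_le ?_ ?_)
    · rw [norm_mul]
      calc ‖u ^ n‖ * ‖u - v‖ ≤ 1 * C := by
            apply mul_le_mul _ huv (norm_nonneg _) zero_le_one
            calc ‖u ^ n‖ = ‖u‖ ^ n := norm_pow _ _
              _ ≤ 1 ^ n := pow_le_pow_left₀ (norm_nonneg _) hu n
              _ = 1 := one_pow n
        _ = C := one_mul C
    · rw [norm_mul]
      calc ‖v‖ * ‖u ^ n - v ^ n‖ ≤ 1 * C :=
            mul_le_mul hv ih (norm_nonneg _) zero_le_one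
        _ = C := one_mul C

theorem f_contraction (p : ℕ) [Fact p.Prime] (hp3 : p ≠ 3) (k : ℕ) (hk : 1 ≤ k)
    (a : ℚ_[p]) (ha : IsEp p a) (x y : ℚ_[p]) (hx : IsEp p x) (hy : IsEp p y) :
    ‖((2 * a + x) / (a ^ 2 + a * x + 1)) ^ k -
      ((2 * a + y) / (a ^ 2 + a * y + 1)) ^ k‖ ≤ (1 / p) * ‖x - y‖ := by
  have hp : p.Prime := Fact.out
  have hp1 : (1 : ℝ) < p := by exact_mod_cast hp.one_lt
  have hp0 : (0 : ℝ) < p := by linarith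
  have hinv : (0 : ℝ) < (p : ℝ)⁻¹ := by positivity
  have hinv1 : (p : ℝ)⁻¹ < 1 := by
    rw [inv_lt_one_iff₀]; right; exact hp1
  -- norm of 3 is 1
  have h3 : ‖(3 : ℚ_[p])‖ = 1 := by
    have h3' : ¬ ((p : ℤ) ∣ 3) := by
      intro h
      have : p ∣ 3 := by exact_mod_cast h
      rcases (Nat.prime_three.eq_one_or_self_of_dvd p this) with h1 | h1
      · exact hp.one_lt.ne' h1
      · exact hp3 h1
    have hle : ‖((3 : ℤ) : ℚ_[p])‖ ≤ 1 := Padic.norm_int_le_one _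
    have hnlt : ¬ ‖((3 : ℤ) : ℚ_[p])‖ < 1 := by
      rw [Padic.norm_intCast_lt_one_iff]; exact h3'
    have : ‖((3 : ℤ) : ℚ_[p])‖ = 1 := le_antisymm hle (not_lt.1 hnlt)
    simpa using this
  have ha1 : ‖a - 1‖ ≤ (p : ℝ)⁻¹ := ha.norm_sub_one_le_s8
  have hx1 : ‖x - 1‖ ≤ (p : ℝ)⁻¹ := hx.norm_sub_one_le_s8
  have hy1 : ‖y - 1‖ ≤ (p : ℝ)⁻¹ := hy.norm_sub_one_le_s8
  have h2le : ‖(2 : ℚ_[p])‖ ≤ 1 := by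
    have := Padic.norm_int_le_one (p := p) 2
    simpa using this
  -- ‖a + 1‖ ≤ 1
  have hap1 : ‖a + 1‖ ≤ 1 := by
    have : a + 1 = (a - 1) + 2 := by ring
    rw [this]
    refine le_trans (Padic.nonarchimedean _ _) (max_le ?_ h2le)
    exact le_trans ha1 (le_of_lt hinv1)
  have ha2 : ‖a ^ 2 - 1‖ ≤ (p : ℝ)⁻¹ := by
    have : a ^ 2 - 1 = (a - 1) * (a + 1) := by ring
    rw [this, norm_mul]
    calc ‖a - 1‖ * ‖a + 1‖ ≤ (p : ℝ)⁻¹ * 1 :=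
          mul_le_mul ha1 hap1 (norm_nonneg _) (le_of_lt hinv)
      _ = (p : ℝ)⁻¹ := mul_one _
  have hax : ∀ z : ℚ_[p], IsEp p z → ‖a * z - 1‖ ≤ (p : ℝ)⁻¹ := by
    intro z hz
    have : a * z - 1 = z * (a - 1) + (z - 1) := by ring
    rw [this]
    refine le_trans (Padic.nonarchimedean _ _) (max_le ?_ hz.norm_sub_one_le_s8)
    rw [norm_mul, hz.1, one_mul]
    exact ha1
  -- denominator norm = 1
  have hden : ∀ z : ℚ_[p], IsEp p z → ‖a ^ 2 + a * z + 1‖ = 1 := by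
    intro z hz
    have heq : a ^ 2 + a * z + 1 = 3 + ((a ^ 2 - 1) + (a * z - 1)) := by ring
    have heps : ‖(a ^ 2 - 1) + (a * z - 1)‖ ≤ (p : ℝ)⁻¹ :=
      le_trans (Padic.nonarchimedean _ _) (max_le ha2 (hax z hz))
    have hne : ‖(3 : ℚ_[p])‖ ≠ ‖(a ^ 2 - 1) + (a * z - 1)‖ := by
      rw [h3]
      exact ne_of_gt (lt_of_le_of_lt heps hinv1)
    rw [heq, Padic.add_eq_max_of_ne hne, h3]
    exact max_eq_left (le_trans heps (le_of_lt hinv1))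
  -- numerator norm = 1
  have hnum : ∀ z : ℚ_[p], IsEp p z → ‖2 * a + z‖ = 1 := by
    intro z hz
    have heq : 2 * a + z = 3 + (2 * (a - 1) + (z - 1)) := by ring
    have heps : ‖2 * (a - 1) + (z - 1)‖ ≤ (p : ℝ)⁻¹ := by
      refine le_trans (Padic.nonarchimedean _ _) (max_le ?_ hz.norm_sub_one_le_s8)
      rw [norm_mul]
      calc ‖(2 : ℚ_[p])‖ * ‖a - 1‖ ≤ 1 * (p : ℝ)⁻¹ :=
            mul_le_mul h2le ha1 (norm_nonneg _) zero_le_one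
        _ = (p : ℝ)⁻¹ := one_mul _
    have hne : ‖(3 : ℚ_[p])‖ ≠ ‖2 * (a - 1) + (z - 1)‖ := by
      rw [h3]
      exact ne_of_gt (lt_of_le_of_lt heps hinv1)
    rw [heq, Padic.add_eq_max_of_ne hne, h3]
    exact max_eq_left (le_trans heps (le_of_lt hinv1))
  have hdx := hden x hx
  have hdy := hden y hy
  have hdx0 : a ^ 2 + a * x + 1 ≠ 0 := by
    intro h; rw [h, norm_zero] at hdx; exact one_ne_zero hdx.symm
  have hdy0 : a ^ 2 + a * y + 1 ≠ 0 := by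
    intro h; rw [h, norm_zero] at hdy; exact one_ne_zero hdy.symm
  set u := (2 * a + x) / (a ^ 2 + a * x + 1) with hu
  set v := (2 * a + y) / (a ^ 2 + a * y + 1) with hv
  have hun : ‖u‖ = 1 := by rw [hu, norm_div, hnum x hx, hdx]; norm_num
  have hvn : ‖v‖ = 1 := by rw [hv, norm_div, hnum y hy, hdy]; norm_num
  have hkey : u - v = ((x - y) * (1 - a ^ 2)) /
      ((a ^ 2 + a * x + 1) * (a ^ 2 + a * y + 1)) := by
    rw [hu, hv]
    rw [div_sub_div _ _ hdx0 hdy0]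
    congr 1
    ring
  have huv : ‖u - v‖ ≤ (p : ℝ)⁻¹ * ‖x - y‖ := by
    rw [hkey, norm_div, norm_mul, norm_mul, hdx, hdy, mul_one, div_one]
    rw [mul_comm]
    apply mul_le_mul_of_nonneg_right _ (norm_nonneg _)
    have : (1 : ℚ_[p]) - a ^ 2 = -(a ^ 2 - 1) := by ring
    rw [this, norm_neg]
    exact ha2
  have := pow_contract (C := (p : ℝ)⁻¹ * ‖x - y‖)
    (by positivity) (le_of_eq hun) (le_of_eq hvn) huv k
  calc ‖u ^ k - v ^ k‖ ≤ (p : ℝ)⁻¹ * ‖x - y‖ := this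
    _ = (1 / p) * ‖x - y‖ := by rw [one_div]
end

section
/- Let p ≠ 3 be a prime, k ≥ 1, and θ ∈ E_p. Then the equation z = ((2θ + z)/(θ² + θz + 1))^k has a unique solution z ∈ E_p. -/
section Aux

variable {p : ℕ} [Fact p.Prime]

lemma Ep.hp1 : (1 : ℝ) < (p : ℝ) := by exact_mod_cast (Fact.out : p.Prime).one_lt

lemma Ep.C_pos : 0 < (p : ℝ) ^ (-(1 : ℝ) / ((p : ℝ) - 1)) :=
  Real.rpow_pos_of_pos (lt_trans one_pos Ep.hp1) _

lemma Ep.C_lt_one : (p : ℝ) ^ (-(1 : ℝ) / ((p : ℝ) - 1)) < 1 := by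
  have h1 : (1 : ℝ) < (p : ℝ) := Ep.hp1
  have h2 : (0 : ℝ) < (p : ℝ) - 1 := by linarith
  exact Real.rpow_lt_one_of_one_lt_of_neg h1 (div_neg_of_neg_of_pos (by norm_num) h2)

/-- a padic number of norm `< p^(-1/(p-1))` has norm `≤ 1/p`. -/
lemma Ep.norm_le_inv {x : ℚ_[p]}
    (h : ‖x‖ < (p : ℝ) ^ (-(1 : ℝ) / ((p : ℝ) - 1))) : ‖x‖ ≤ (p : ℝ)⁻¹ := by
  have h1 : ‖x‖ < (p : ℝ) ^ ((-1 : ℤ) + 1) := by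
    simpa using lt_of_lt_of_le h (le_of_lt Ep.C_lt_one)
  have := (Padic.norm_le_pow_iff_norm_lt_pow_add_one x (-1)).2 h1
  simpa [zpow_neg] using this

/-- `3` is a unit in `ℚ_[p]` for `p ≠ 3`. -/
lemma Ep.norm_three (hp3 : p ≠ 3) : ‖(3 : ℚ_[p])‖ = 1 := by
  have hcast : ((3 : ℤ) : ℚ_[p]) = (3 : ℚ_[p]) := by norm_cast
  have hle : ‖(3 : ℚ_[p])‖ ≤ 1 := by
    rw [← hcast]; exact Padic.norm_int_le_one _
  rcases lt_or_eq_of_le hle with hlt | heq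
  · exfalso
    rw [← hcast] at hlt
    have hdvd : (p : ℤ) ∣ 3 := (Padic.norm_intCast_lt_one_iff (k := 3)).1 hlt
    have hdvd' : p ∣ 3 := by exact_mod_cast hdvd
    exact hp3 ((Nat.prime_dvd_prime_iff_eq (Fact.out : p.Prime) (by norm_num)).1 hdvd')
  · exact heq

end Aux

theorem unique_fixed_point (p : ℕ) [Fact p.Prime] (hp3 : p ≠ 3) (k : ℕ) (hk : 1 ≤ k)
    (θ : ℚ_[p]) (hθ : IsEp p θ) :
    ∃! z : ℚ_[p], IsEp p z ∧ z = ((2 * θ + z) / (θ ^ 2 + θ * z + 1)) ^ k := by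
  classical
  set C : ℝ := (p : ℝ) ^ (-(1 : ℝ) / ((p : ℝ) - 1)) with hCdef
  have hp1 : (1 : ℝ) < (p : ℝ) := Ep.hp1
  have hCpos : 0 < C := Ep.C_pos
  have hC1 : C < 1 := Ep.C_lt_one
  obtain ⟨hθ1, hθ2⟩ := hθ
  have hθle : ‖θ‖ ≤ 1 := le_of_eq hθ1
  have hθsub : ‖θ - 1‖ ≤ (p : ℝ)⁻¹ := Ep.norm_le_inv hθ2
  have hpinv_lt : (p : ℝ)⁻¹ < 1 := inv_lt_one_of_one_lt₀ hp1
  have hpinv_pos : (0 : ℝ) < (p : ℝ)⁻¹ := by positivity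
  have h3 : ‖(3 : ℚ_[p])‖ = 1 := Ep.norm_three hp3
  have h2le : ‖(2 : ℚ_[p])‖ ≤ 1 := by
    have : ((2 : ℤ) : ℚ_[p]) = (2 : ℚ_[p]) := by norm_cast
    rw [← this]; exact Padic.norm_int_le_one _
  -- notation
  set u : ℚ_[p] → ℚ_[p] := fun z => (2 * θ + z) / (θ ^ 2 + θ * z + 1) with hu
  set f : ℚ_[p] → ℚ_[p] := fun z => (u z) ^ k with hfdef
  -- denominator has norm 1
  have hD : ∀ z : ℚ_[p], IsEp p z → ‖θ ^ 2 + θ * z + 1‖ = 1 := by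
    intro z ⟨hz1, hz2⟩
    have hzsub : ‖z - 1‖ < 1 := lt_of_lt_of_le hz2 (le_of_lt hC1)
    have hθsub1 : ‖θ - 1‖ < 1 := lt_of_lt_of_le hθ2 (le_of_lt hC1)
    have hsub : ‖(θ ^ 2 + θ * z + 1) - 3‖ < 1 := by
      have heq : (θ ^ 2 + θ * z + 1) - 3 = (θ - 1) * (θ + 1) + (θ * (z - 1) + (θ - 1)) := by
        ring
      rw [heq]
      have hθp1 : ‖θ + 1‖ ≤ 1 := by
        refine le_trans (Padic.nonarchimedean θ 1) ?_
        simp [hθle]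
      have e1 : ‖(θ - 1) * (θ + 1)‖ < 1 := by
        rw [norm_mul]
        calc ‖θ - 1‖ * ‖θ + 1‖ ≤ ‖θ - 1‖ * 1 :=
              mul_le_mul_of_nonneg_left hθp1 (norm_nonneg _)
          _ < 1 := by simpa using hθsub1
      have e2 : ‖θ * (z - 1)‖ < 1 := by
        rw [norm_mul]
        calc ‖θ‖ * ‖z - 1‖ ≤ 1 * ‖z - 1‖ :=
              mul_le_mul_of_nonneg_right hθle (norm_nonneg _)
          _ < 1 := by simpa using hzsub
      calc ‖(θ - 1) * (θ + 1) + (θ * (z - 1) + (θ - 1))‖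
          ≤ max ‖(θ - 1) * (θ + 1)‖ ‖θ * (z - 1) + (θ - 1)‖ := Padic.nonarchimedean _ _
        _ < 1 := by
            refine max_lt e1 ?_
            exact lt_of_le_of_lt (Padic.nonarchimedean _ _) (max_lt e2 hθsub1)
    have heq : θ ^ 2 + θ * z + 1 = 3 + ((θ ^ 2 + θ * z + 1) - 3) := by ring
    have hne : ‖(3 : ℚ_[p])‖ ≠ ‖(θ ^ 2 + θ * z + 1) - 3‖ := by
      rw [h3]; exact (ne_of_lt hsub).symm
    rw [heq, Padic.add_eq_max_of_ne hne, h3]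
    exact max_eq_left hsub.le
  have hDne : ∀ z : ℚ_[p], IsEp p z → θ ^ 2 + θ * z + 1 ≠ 0 := by
    intro z hz h0
    have := hD z hz
    rw [h0, norm_zero] at this
    norm_num at this
  -- numerator has norm 1
  have hN : ∀ z : ℚ_[p], IsEp p z → ‖2 * θ + z‖ = 1 := by
    intro z ⟨hz1, hz2⟩
    have hzsub : ‖z - 1‖ < 1 := lt_of_lt_of_le hz2 (le_of_lt hC1)
    have hθsub1 : ‖θ - 1‖ < 1 := lt_of_lt_of_le hθ2 (le_of_lt hC1)
    have hsub : ‖(2 * θ + z) - 3‖ < 1 := by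
      have heq : (2 * θ + z) - 3 = 2 * (θ - 1) + (z - 1) := by ring
      rw [heq]
      have e1 : ‖2 * (θ - 1)‖ < 1 := by
        rw [norm_mul]
        calc ‖(2 : ℚ_[p])‖ * ‖θ - 1‖ ≤ 1 * ‖θ - 1‖ :=
              mul_le_mul_of_nonneg_right h2le (norm_nonneg _)
          _ < 1 := by simpa using hθsub1
      exact lt_of_le_of_lt (Padic.nonarchimedean _ _) (max_lt e1 hzsub)
    have heq : 2 * θ + z = 3 + ((2 * θ + z) - 3) := by ring
    have hne : ‖(3 : ℚ_[p])‖ ≠ ‖(2 * θ + z) - 3‖ := by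
      rw [h3]; exact (ne_of_lt hsub).symm
    rw [heq, Padic.add_eq_max_of_ne hne, h3]
    exact max_eq_left hsub.le
  -- u has norm 1
  have hunorm : ∀ z : ℚ_[p], IsEp p z → ‖u z‖ = 1 := by
    intro z hz
    rw [hu]
    simp only [norm_div, hN z hz, hD z hz, one_div_one]
  -- ‖u z - 1‖ ≤ ‖θ - 1‖
  have husub : ∀ z : ℚ_[p], IsEp p z → ‖u z - 1‖ ≤ ‖θ - 1‖ := by
    intro z hz
    have hDn := hDne z hz
    have heq : u z - 1 = (-(θ - 1)) * ((θ - 1) + z) / (θ ^ 2 + θ * z + 1) := by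
      rw [hu]
      have hDn' : θ * (θ + z) + 1 ≠ 0 := by convert hDn using 1; ring
      field_simp
      ring
    rw [heq, norm_div, hD z hz, div_one, norm_mul, norm_neg]
    have h2 : ‖(θ - 1) + z‖ ≤ 1 := by
      refine le_trans (Padic.nonarchimedean _ _) ?_
      have : ‖θ - 1‖ ≤ 1 := le_of_lt (lt_of_lt_of_le hθ2 (le_of_lt hC1))
      simp [this, le_of_eq hz.1]
    calc ‖θ - 1‖ * ‖(θ - 1) + z‖ ≤ ‖θ - 1‖ * 1 :=
          mul_le_mul_of_nonneg_left h2 (norm_nonneg _)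
      _ = ‖θ - 1‖ := mul_one _
  -- f maps E_p into E_p
  have hmaps : ∀ z : ℚ_[p], IsEp p z → IsEp p (f z) := by
    intro z hz
    constructor
    · rw [hfdef]
      simp only [norm_pow, hunorm z hz, one_pow]
    · have hgeom : (u z) ^ k - 1 =
          (∑ i ∈ Finset.range k, (u z) ^ i * (1 : ℚ_[p]) ^ (k - 1 - i)) * ((u z) - 1) := by
        rw [geom_sum₂_mul]
        simp
      have hsum : ‖∑ i ∈ Finset.range k, (u z) ^ i * (1 : ℚ_[p]) ^ (k - 1 - i)‖ ≤ 1 := by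
        refine IsUltrametricDist.norm_sum_le_of_forall_le_of_nonneg zero_le_one ?_
        intro i _
        rw [norm_mul, norm_pow, norm_pow, hunorm z hz, norm_one]
        simp
      calc ‖f z - 1‖ = ‖(∑ i ∈ Finset.range k, (u z) ^ i * (1 : ℚ_[p]) ^ (k - 1 - i)) * ((u z) - 1)‖ := by
            rw [hfdef]; rw [← hgeom]
        _ = ‖∑ i ∈ Finset.range k, (u z) ^ i * (1 : ℚ_[p]) ^ (k - 1 - i)‖ * ‖u z - 1‖ := norm_mul _ _
        _ ≤ 1 * ‖u z - 1‖ := mul_le_mul_of_nonneg_right hsum (norm_nonneg _)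
        _ = ‖u z - 1‖ := one_mul _
        _ ≤ ‖θ - 1‖ := husub z hz
        _ < C := hθ2
  -- Lipschitz estimate
  have hlip : ∀ z w : ℚ_[p], IsEp p z → IsEp p w →
      ‖f z - f w‖ ≤ (p : ℝ)⁻¹ * ‖z - w‖ := by
    intro z w hz hw
    have hulip : ‖u z - u w‖ ≤ (p : ℝ)⁻¹ * ‖z - w‖ := by
      have hz0 := hDne z hz
      have hw0 := hDne w hw
      have heq : u z - u w =
          (z - w) * ((1 - θ) * (1 + θ)) / ((θ ^ 2 + θ * z + 1) * (θ ^ 2 + θ * w + 1)) := by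
        rw [hu]
        have hz0' : θ * (θ + z) + 1 ≠ 0 := by convert hz0 using 1; ring
        have hw0' : θ * (θ + w) + 1 ≠ 0 := by convert hw0 using 1; ring
        field_simp
        ring
      rw [heq, norm_div, norm_mul, norm_mul, norm_mul, hD z hz, hD w hw, one_mul, div_one]
      have h1θ : ‖1 - θ‖ ≤ (p : ℝ)⁻¹ := by
        rw [show (1 : ℚ_[p]) - θ = -(θ - 1) by ring, norm_neg]
        exact hθsub
      have h1θ' : ‖1 + θ‖ ≤ 1 := by
        refine le_trans (Padic.nonarchimedean _ _) ?_
        simp [hθle]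
      calc ‖z - w‖ * (‖1 - θ‖ * ‖1 + θ‖)
          ≤ ‖z - w‖ * ((p : ℝ)⁻¹ * 1) := by
            refine mul_le_mul_of_nonneg_left ?_ (norm_nonneg _)
            exact mul_le_mul h1θ h1θ' (norm_nonneg _) (le_of_lt hpinv_pos)
        _ = (p : ℝ)⁻¹ * ‖z - w‖ := by ring
    have hgeom : (u z) ^ k - (u w) ^ k =
        (∑ i ∈ Finset.range k, (u z) ^ i * (u w) ^ (k - 1 - i)) * ((u z) - (u w)) :=
      (geom_sum₂_mul _ _ k).symm
    have hsum : ‖∑ i ∈ Finset.range k, (u z) ^ i * (u w) ^ (k - 1 - i)‖ ≤ 1 := by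
      refine IsUltrametricDist.norm_sum_le_of_forall_le_of_nonneg zero_le_one ?_
      intro i _
      rw [norm_mul, norm_pow, norm_pow, hunorm z hz, hunorm w hw]
      simp
    calc ‖f z - f w‖ = ‖(∑ i ∈ Finset.range k, (u z) ^ i * (u w) ^ (k - 1 - i)) * ((u z) - (u w))‖ := by
          rw [hfdef]; rw [← hgeom]
      _ = ‖∑ i ∈ Finset.range k, (u z) ^ i * (u w) ^ (k - 1 - i)‖ * ‖u z - u w‖ := norm_mul _ _
      _ ≤ 1 * ‖u z - u w‖ := mul_le_mul_of_nonneg_right hsum (norm_nonneg _)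
      _ = ‖u z - u w‖ := one_mul _
      _ ≤ (p : ℝ)⁻¹ * ‖z - w‖ := hulip
  -- the set E_p is closed
  have hclosed : IsClosed {x : ℚ_[p] | IsEp p x} := by
    have h1 : IsClosed {x : ℚ_[p] | ‖x‖ = 1} :=
      isClosed_eq continuous_norm continuous_const
    have h2 : IsClosed (Metric.ball (1 : ℚ_[p]) C) := IsUltrametricDist.isClosed_ball 1 C
    have hset : {x : ℚ_[p] | IsEp p x} = {x : ℚ_[p] | ‖x‖ = 1} ∩ Metric.ball (1 : ℚ_[p]) C := by
      ext x
      simp [IsEp, Metric.mem_ball, dist_eq_norm, hCdef, Set.mem_inter_iff]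
    rw [hset]
    exact h1.inter h2
  -- Banach fixed point on the subtype
  haveI : CompleteSpace {x : ℚ_[p] | IsEp p x} := hclosed.completeSpace_coe
  haveI : Nonempty {x : ℚ_[p] | IsEp p x} :=
    ⟨⟨1, by constructor <;> simp [Ep.C_pos]⟩⟩
  set g : {x : ℚ_[p] | IsEp p x} → {x : ℚ_[p] | IsEp p x} :=
    fun z => ⟨f z.1, hmaps z.1 z.2⟩ with hg
  have hK1 : ((⟨(p : ℝ)⁻¹, le_of_lt hpinv_pos⟩ : NNReal) : ℝ) < 1 := hpinv_lt
  have hcontr : ContractingWith ⟨(p : ℝ)⁻¹, le_of_lt hpinv_pos⟩ g := by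
    constructor
    · exact_mod_cast hK1
    · refine LipschitzWith.of_dist_le_mul ?_
      intro x y
      rw [Subtype.dist_eq, Subtype.dist_eq, dist_eq_norm, dist_eq_norm]
      exact hlip x.1 y.1 x.2 y.2
  set z₀ : {x : ℚ_[p] | IsEp p x} := ContractingWith.fixedPoint g hcontr with hz₀
  have hfix : g z₀ = z₀ := hcontr.fixedPoint_isFixedPt
  have hfixv : f z₀.1 = z₀.1 := by
    have := congrArg Subtype.val hfix
    exact this
  refine ⟨z₀.1, ⟨z₀.2, hfixv.symm⟩, ?_⟩
  intro y ⟨hy, hyfix⟩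
  have hyfix' : f y = y := by
    show ((2 * θ + y) / (θ ^ 2 + θ * y + 1)) ^ k = y
    exact hyfix.symm
  -- uniqueness
  by_contra hne
  have hpos : 0 < ‖y - z₀.1‖ := by
    rw [norm_pos_iff, sub_ne_zero]
    exact hne
  have : ‖y - z₀.1‖ ≤ (p : ℝ)⁻¹ * ‖y - z₀.1‖ := by
    calc ‖y - z₀.1‖ = ‖f y - f z₀.1‖ := by rw [hfixv, hyfix']
      _ ≤ (p : ℝ)⁻¹ * ‖y - z₀.1‖ := hlip y z₀.1 hy z₀.2
  nlinarith
end

section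
/- Let p ≠ 3 be a prime, k ≥ 1, and θ, z_0, z_1 ∈ E_p. If z_0 = ((z_0 + θz_1 + θ²)/(θ²z_0 + θz_1 + 1))^k, then z_0 = 1. -/
private lemma isEp_norm_sub_one_lt_one {p : ℕ} [Fact p.Prime] {x : ℚ_[p]}
    (hx : IsEp p x) : ‖x - 1‖ < 1 := by
  have hp : (1:ℝ) < p := by exact_mod_cast (Fact.out : p.Prime).one_lt
  refine hx.2.trans_le (le_of_lt ?_)
  apply Real.rpow_lt_one_of_one_lt_of_neg hp
  have hpos : (0:ℝ) < (p:ℝ) - 1 := by linarith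
  exact div_neg_of_neg_of_pos (by norm_num) hpos

private lemma mul_near_one {p : ℕ} [Fact p.Prime] {a b : ℚ_[p]}
    (ha : ‖a‖ = 1) (ha1 : ‖a - 1‖ < 1) (hb1 : ‖b - 1‖ < 1) : ‖a * b - 1‖ < 1 := by
  have heq : a * b - 1 = a * (b - 1) + (a - 1) := by ring
  rw [heq]
  refine lt_of_le_of_lt (Padic.nonarchimedean _ _) ?_
  rw [norm_mul, ha, one_mul]
  exact max_lt hb1 ha1

theorem ti_solution_z0_eq_one (p : ℕ) [Fact p.Prime] (hp3 : p ≠ 3)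
    (k : ℕ) (hk : 1 ≤ k) (θ z₀ z₁ : ℚ_[p])
    (hθ : IsEp p θ) (h0 : IsEp p z₀) (h1 : IsEp p z₁)
    (h : z₀ = ((z₀ + θ * z₁ + θ ^ 2) / (θ ^ 2 * z₀ + θ * z₁ + 1)) ^ k) :
    z₀ = 1 := by
  have hθ1 : ‖θ - 1‖ < 1 := isEp_norm_sub_one_lt_one hθ
  have h01 : ‖z₀ - 1‖ < 1 := isEp_norm_sub_one_lt_one h0
  have h11 : ‖z₁ - 1‖ < 1 := isEp_norm_sub_one_lt_one h1
  obtain ⟨hθn, -⟩ := hθ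
  obtain ⟨h0n, -⟩ := h0
  obtain ⟨h1n, -⟩ := h1
  set A : ℚ_[p] := z₀ + θ * z₁ + θ ^ 2 with hA
  set B : ℚ_[p] := θ ^ 2 * z₀ + θ * z₁ + 1 with hB
  -- small norms
  have hθ2 : ‖θ ^ 2 - 1‖ < 1 := by
    have := mul_near_one hθn hθ1 hθ1
    simpa [sq] using this
  have hθz1 : ‖θ * z₁ - 1‖ < 1 := mul_near_one hθn hθ1 h11
  have hθ2z0 : ‖θ ^ 2 * z₀ - 1‖ < 1 := by
    have hn2 : ‖θ ^ 2‖ = 1 := by rw [norm_pow, hθn, one_pow]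
    exact mul_near_one hn2 hθ2 h01
  -- ‖(3 : ℚ_[p])‖ = 1
  have h3 : ‖(3 : ℚ_[p])‖ = 1 := by
    have hle : ‖(3 : ℚ_[p])‖ ≤ 1 := by
      have := Padic.norm_int_le_one (p := p) 3
      simpa using this
    rcases lt_or_eq_of_le hle with hlt | heq
    · exfalso
      have hh := (Padic.norm_intCast_lt_one_iff (p := p) (k := 3)).mp (by simpa using hlt)
      have hd : p ∣ 3 := by exact_mod_cast hh
      exact hp3 ((Nat.prime_dvd_prime_iff_eq (Fact.out : p.Prime) (by norm_num)).mp hd)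
    · exact heq
  -- ‖B‖ = 1
  have hBn : ‖B‖ = 1 := by
    have hB3 : ‖B - 3‖ < 1 := by
      have heq : B - 3 = (θ ^ 2 * z₀ - 1) + (θ * z₁ - 1) := by rw [hB]; ring
      rw [heq]
      exact lt_of_le_of_lt (Padic.nonarchimedean _ _) (max_lt hθ2z0 hθz1)
    have hne : ‖(3 : ℚ_[p])‖ ≠ ‖B - 3‖ := by rw [h3]; exact (hB3.trans_le le_rfl).ne'
    have hBe : B = 3 + (B - 3) := by ring
    rw [hBe, Padic.add_eq_max_of_ne hne, h3]
    exact max_eq_left hB3.le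
  -- ‖A‖ ≤ 1
  have hAn : ‖A‖ ≤ 1 := by
    have h1' : ‖θ * z₁‖ = 1 := by rw [norm_mul, hθn, h1n, one_mul]
    have h2' : ‖θ ^ 2‖ = 1 := by rw [norm_pow, hθn, one_pow]
    calc ‖A‖ ≤ max ‖z₀ + θ * z₁‖ ‖θ ^ 2‖ := Padic.nonarchimedean _ _
      _ ≤ max (max ‖z₀‖ ‖θ * z₁‖) ‖θ ^ 2‖ :=
          max_le_max (Padic.nonarchimedean _ _) le_rfl
      _ = 1 := by rw [h0n, h1', h2']; simp
  have hB0 : B ≠ 0 := by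
    intro hBz
    rw [hBz] at hBn
    simp at hBn
  -- main algebraic identity
  have h2 : z₀ * B ^ k = A ^ k := by
    rw [h, div_pow, div_mul_cancel₀]
    exact pow_ne_zero _ hB0
  set S : ℚ_[p] := ∑ i ∈ Finset.range k, A ^ i * B ^ (k - 1 - i) with hS
  have hgeo := geom_sum₂_mul A B k
  have key : (z₀ - 1) * (B ^ k - S * (1 - θ ^ 2)) = 0 := by
    linear_combination h2 - hgeo
  by_contra hne1
  have hz : z₀ - 1 ≠ 0 := sub_ne_zero.mpr hne1
  have hBk : B ^ k = S * (1 - θ ^ 2) :=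
    sub_eq_zero.mp ((mul_eq_zero.mp key).resolve_left hz)
  have hSn : ‖S‖ ≤ 1 := by
    apply IsUltrametricDist.norm_sum_le_of_forall_le_of_nonneg zero_le_one
    intro i _
    rw [norm_mul, norm_pow, norm_pow, hBn, one_pow, mul_one]
    exact pow_le_one₀ (norm_nonneg _) hAn
  have h1θ2 : ‖1 - θ ^ 2‖ < 1 := by
    rw [show (1:ℚ_[p]) - θ ^ 2 = -(θ ^ 2 - 1) by ring, norm_neg]
    exact hθ2
  have hcontra : (1:ℝ) < 1 := by
    calc (1:ℝ) = ‖B ^ k‖ := by rw [norm_pow, hBn, one_pow]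
      _ = ‖S‖ * ‖1 - θ ^ 2‖ := by rw [hBk, norm_mul]
      _ ≤ 1 * ‖1 - θ ^ 2‖ := mul_le_mul_of_nonneg_right hSn (norm_nonneg _)
      _ < 1 := by rw [one_mul]; exact h1θ2
  exact absurd hcontra (lt_irrefl 1)
end

section
/- Let p = 3 and let θ ∈ ℚ_3 satisfy |θ - 1|_3 < 3^(-2) (i.e., θ ≡ 1 mod 27). For any k ≥ 1, the polynomial g(x) = θx^{k+1} - x^k + (θ² + 1)x - 2θ has a unique root x_* ∈ ℤ_3 with x_* ≡ 1 (mod 9). -/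
open Polynomial

theorem hensel_root_near_one (θ : ℚ_[3]) (hθ : ‖θ - 1‖ < (3 : ℝ) ^ (-2 : ℤ))
    (k : ℕ) (hk : 1 ≤ k) :
    ∃! x : ℚ_[3], ‖x‖ ≤ 1 ∧ ‖x - 1‖ ≤ (3 : ℝ) ^ (-2 : ℤ) ∧
      θ * x ^ (k + 1) - x ^ k + (θ ^ 2 + 1) * x - 2 * θ = 0 := by
  have hθ3 : ‖θ - 1‖ ≤ (3 : ℝ) ^ (-3 : ℤ) := by
    have h := (Padic.norm_le_pow_iff_norm_lt_pow_add_one (θ - 1) (-3)).2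
    push_cast at h
    norm_num at h hθ ⊢
    exact h hθ
  have h3lt1 : ((3 : ℝ) ^ (-3 : ℤ)) < 1 := by norm_num
  have hθle1 : ‖θ‖ ≤ 1 := by
    calc ‖θ‖ = ‖(θ - 1) + 1‖ := by ring_nf
    _ ≤ max ‖θ - 1‖ ‖(1 : ℚ_[3])‖ := Padic.nonarchimedean _ _
    _ ≤ 1 := max_le (le_of_lt (lt_of_le_of_lt hθ3 h3lt1)) (by simp)
  set θ' : ℤ_[3] := ⟨θ, hθle1⟩ with hθ'def
  have hcoe : ((θ' : ℚ_[3])) = θ := rfl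
  have hε : ‖θ' - 1‖ ≤ (3 : ℝ) ^ (-3 : ℤ) := by
    have : ((θ' - 1 : ℤ_[3]) : ℚ_[3]) = θ - 1 := by push_cast [hcoe]; ring
    rw [PadicInt.norm_def, this]; exact hθ3
  set F : Polynomial ℤ_[3] :=
    C θ' * X ^ (k + 1) - X ^ k + C (θ' ^ 2 + 1) * X - C (2 * θ') with hF
  have hFeval : ∀ w : ℤ_[3],
      F.eval w = θ' * w ^ (k + 1) - w ^ k + (θ' ^ 2 + 1) * w - 2 * θ' := by
    intro w; simp [hF]
  have hFeval1 : F.eval 1 = θ' * (θ' - 1) := by rw [hFeval]; ring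
  have hF'eval1 : F.derivative.eval 1 = 3 + (θ' - 1) * (k + 3) + (θ' - 1) ^ 2 := by
    simp [hF, derivative_X_pow, derivative_pow, derivative_C]
    push_cast
    ring
  have h3norm : ‖(3 : ℤ_[3])‖ = (3 : ℝ) ^ (-1 : ℤ) := by
    have : ((3 : ℤ_[3])) = ((3 : ℕ) : ℤ_[3]) := by norm_num
    rw [this, PadicInt.norm_p (p := 3)] <;> norm_num
  have hrest : ‖(θ' - 1) * (k + 3) + (θ' - 1) ^ 2‖ ≤ (3 : ℝ) ^ (-3 : ℤ) := by
    refine le_trans (PadicInt.nonarchimedean _ _) (max_le ?_ ?_)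
    · calc ‖(θ' - 1) * (k + 3)‖ ≤ ‖θ' - 1‖ * ‖((k : ℤ_[3]) + 3)‖ := norm_mul_le _ _
      _ ≤ (3 : ℝ) ^ (-3 : ℤ) * 1 := by
          apply mul_le_mul hε (PadicInt.norm_le_one _) (norm_nonneg _)
          positivity
      _ = (3 : ℝ) ^ (-3 : ℤ) := mul_one _
    · calc ‖(θ' - 1) ^ 2‖ ≤ ‖θ' - 1‖ ^ 2 := norm_pow_le' _ (by norm_num)
      _ ≤ ((3 : ℝ) ^ (-3 : ℤ)) ^ 2 := by
          apply pow_le_pow_left₀ (norm_nonneg _) hε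
      _ ≤ (3 : ℝ) ^ (-3 : ℤ) := by norm_num
  have hne : ‖(3 : ℤ_[3])‖ ≠ ‖(θ' - 1) * (k + 3) + (θ' - 1) ^ 2‖ := by
    rw [h3norm]
    intro h
    rw [← h] at hrest
    norm_num at hrest
  have hF'norm : ‖F.derivative.eval 1‖ = (3 : ℝ) ^ (-1 : ℤ) := by
    rw [hF'eval1, add_assoc, PadicInt.norm_add_eq_max_of_ne hne, h3norm]
    rw [max_eq_left]
    exact le_trans hrest (by norm_num)
  have hnorm : ‖F.eval 1‖ < ‖F.derivative.eval 1‖ ^ 2 := by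
    rw [hFeval1, hF'norm]
    calc ‖θ' * (θ' - 1)‖ ≤ ‖θ'‖ * ‖θ' - 1‖ := norm_mul_le _ _
    _ ≤ 1 * (3 : ℝ) ^ (-3 : ℤ) := by
        apply mul_le_mul (PadicInt.norm_le_one _) hε (norm_nonneg _) zero_le_one
    _ < ((3 : ℝ) ^ (-1 : ℤ)) ^ 2 := by norm_num
  obtain ⟨z, hz0, hzdist, _, huniq⟩ := hensels_lemma hnorm
  simp only [Polynomial.coe_aeval_eq_eval] at hz0 hzdist huniq
  have hzdist' : ‖z - 1‖ ≤ (3 : ℝ) ^ (-2 : ℤ) := by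
    have h := (PadicInt.norm_le_pow_iff_norm_lt_pow_add_one (z - 1) (-2)).2
    push_cast at h
    norm_num at h ⊢
    rw [hF'norm] at hzdist
    norm_num at hzdist
    exact h hzdist
  refine ⟨(z : ℚ_[3]), ⟨z.norm_le_one, ?_, ?_⟩, ?_⟩
  · have : ((z - 1 : ℤ_[3]) : ℚ_[3]) = (z : ℚ_[3]) - 1 := by push_cast; ring
    rw [← this, ← PadicInt.norm_def]; exact hzdist'
  · have := congrArg (fun w : ℤ_[3] => (w : ℚ_[3])) (hFeval z ▸ hz0)
    have h2 : ((2 : ℤ_[3]) : ℚ_[3]) = 2 := by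
      rw [show (2 : ℤ_[3]) = ((2 : ℕ) : ℤ_[3]) by norm_num, PadicInt.coe_natCast]; norm_num
    push_cast [hcoe, h2] at this
    rw [← this]
  · rintro x ⟨hx1, hx2, hx3⟩
    set x' : ℤ_[3] := ⟨x, hx1⟩ with hx'def
    have hxcoe : ((x' : ℚ_[3])) = x := rfl
    have hx'0 : F.eval x' = 0 := by
      have : ((F.eval x' : ℤ_[3]) : ℚ_[3]) = 0 := by
        have h2 : ((2 : ℤ_[3]) : ℚ_[3]) = 2 := by
          rw [show (2 : ℤ_[3]) = ((2 : ℕ) : ℤ_[3]) by norm_num, PadicInt.coe_natCast]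
          norm_num
        rw [hFeval]; push_cast [hcoe, hxcoe, h2]
        rw [← hx3]
      exact PadicInt.coe_eq_zero.1 this
    have hx'dist : ‖x' - 1‖ < ‖F.derivative.eval 1‖ := by
      rw [hF'norm]
      have : ((x' - 1 : ℤ_[3]) : ℚ_[3]) = x - 1 := by push_cast [hxcoe]; ring
      rw [PadicInt.norm_def, this]
      exact lt_of_le_of_lt hx2 (by norm_num)
    have := huniq x' hx'0 hx'dist
    rw [← hxcoe, this]
end

section
/- Let p = 3, let k be an even positive integer not divisible by 3, and let θ ∈ E_3 (i.e., |θ|_3 = 1 and θ ≡ 1 mod 3). Then the polynomial g(x) = θx^{k+1} - x^k + (θ² + 1)x - 2θ has a unique root x_* ∈ ℤ_3 with x_* ≡ 2 (mod 3). -/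
lemma toZMod_eq_zero_iff_dvd (x : ℤ_[3]) :
    PadicInt.toZMod x = 0 ↔ (3 : ℤ_[3]) ∣ x := by
  rw [← RingHom.mem_ker, PadicInt.ker_toZMod, PadicInt.maximalIdeal_eq_span_p,
    Ideal.mem_span_singleton]
  norm_num

theorem hensel_root_near_two (k : ℕ) (hk : 1 ≤ k) (hke : Even k) (hk3 : ¬ 3 ∣ k)
    (θ : ℚ_[3]) (hθ : IsEp 3 θ) :
    ∃! x : ℚ_[3], ‖x‖ ≤ 1 ∧ ‖x - 2‖ ≤ (3 : ℝ)⁻¹ ∧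
      θ * x ^ (k + 1) - x ^ k + (θ ^ 2 + 1) * x - 2 * θ = 0 := by
  obtain ⟨hθ1, hθ2⟩ := hθ
  set Θ : ℤ_[3] := ⟨θ, hθ1.le⟩ with hΘdef
  have h2c : ((2 : ℤ_[3]) : ℚ_[3]) = 2 := rfl
  -- Θ ≡ 1 mod 3
  have hΘ1 : (3 : ℤ_[3]) ∣ Θ - 1 := by
    have hlt : ‖Θ - 1‖ < 1 := by
      have : ‖Θ - 1‖ = ‖θ - 1‖ := by
        rw [PadicInt.norm_def]; simp [hΘdef]; rfl
      rw [this]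
      refine hθ2.trans_le ?_
      have : ((3 : ℕ) : ℝ) ^ (-(1 : ℝ) / (((3 : ℕ) : ℝ) - 1)) < 1 := by
        apply Real.rpow_lt_one_of_one_lt_of_neg <;> norm_num
      push_cast at this ⊢
      linarith
    have := (PadicInt.norm_lt_one_iff_dvd (Θ - 1)).1 hlt
    exact_mod_cast this
  -- 2^k ≡ 1 mod 3
  have h2k : (3 : ℤ_[3]) ∣ 2 ^ k - 1 := by
    obtain ⟨m, hm⟩ := hke
    have h34 : (3 : ℤ_[3]) = 4 - 1 := by norm_num
    rw [h34, hm, ← two_mul, pow_mul]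
    simpa [show (2 : ℤ_[3]) ^ 2 = 4 by norm_num] using sub_dvd_pow_sub_pow (4 : ℤ_[3]) 1 m
  -- the polynomial
  set F : Polynomial ℤ_[3] :=
    Polynomial.C Θ * Polynomial.X ^ (k + 1) - Polynomial.X ^ k +
      Polynomial.C (Θ ^ 2 + 1) * Polynomial.X - Polynomial.C (2 * Θ) with hF
  have hFeval : ∀ z : ℤ_[3],
      F.eval z = Θ * z ^ (k + 1) - z ^ k + (Θ ^ 2 + 1) * z - 2 * Θ := by
    intro z; simp [hF]
  have hFderiv : F.derivative.eval 2 =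
      Θ * ((k + 1) * 2 ^ k) - k * 2 ^ (k - 1) + (Θ ^ 2 + 1) := by
    simp [hF, Polynomial.derivative_pow]
  -- F(2) ≡ 0 mod 3
  have hF2 : (3 : ℤ_[3]) ∣ F.eval 2 := by
    obtain ⟨a, ha⟩ := hΘ1
    obtain ⟨b, hb⟩ := h2k
    have hΘ' : Θ = 1 + 3 * a := by linear_combination ha
    have h2k' : (2 : ℤ_[3]) ^ k = 1 + 3 * b := by linear_combination hb
    rw [hFeval, pow_succ, h2k', hΘ']
    exact ⟨1 + b + 4 * a + 6 * a * b + 6 * a ^ 2, by ring⟩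
  -- F'(2) not ≡ 0 mod 3
  have hφΘ : PadicInt.toZMod Θ = 1 := by
    have := (toZMod_eq_zero_iff_dvd (Θ - 1)).2 hΘ1
    rwa [map_sub, map_one, sub_eq_zero] at this
  have h2kZ : ((2 : ZMod 3)) ^ k = 1 := by
    obtain ⟨m, hm⟩ := hke
    rw [hm, ← two_mul, pow_mul]
    rw [show (2 : ZMod 3) ^ 2 = 1 by decide, one_pow]
  have h22 : (2 : ZMod 3) * 2 = 1 := by decide
  have h2k1Z : ((2 : ZMod 3)) ^ (k - 1) = 2 := by
    have h1 : (2 : ZMod 3) * 2 ^ (k - 1) = 1 := by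
      rw [← pow_succ', Nat.sub_add_cancel hk, h2kZ]
    calc (2 : ZMod 3) ^ (k - 1) = 2 * 2 * 2 ^ (k - 1) := by rw [h22, one_mul]
    _ = 2 * (2 * 2 ^ (k - 1)) := by ring
    _ = 2 * 1 := by rw [h1]
    _ = 2 := mul_one 2
  have hF'2 : ¬ (3 : ℤ_[3]) ∣ F.derivative.eval 2 := by
    rw [← toZMod_eq_zero_iff_dvd, hFderiv]
    simp only [map_add, map_sub, map_mul, map_pow, map_one, map_natCast, map_ofNat]
    rw [hφΘ, h2kZ, h2k1Z]
    intro hc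
    apply hk3
    have h30 : (3 : ZMod 3) = 0 := by decide
    have hkz : (k : ZMod 3) = 0 := by linear_combination h30 - hc
    exact (ZMod.natCast_eq_zero_iff k 3).1 hkz
  -- norms
  have hnormF' : ‖F.derivative.eval 2‖ = 1 := by
    refine le_antisymm (PadicInt.norm_le_one _) (not_lt.1 ?_)
    rw [PadicInt.norm_lt_one_iff_dvd]
    intro h; exact hF'2 (by exact_mod_cast h)
  have hnorm : ‖F.eval 2‖ < ‖F.derivative.eval 2‖ ^ 2 := by
    rw [hnormF', one_pow, PadicInt.norm_lt_one_iff_dvd]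
    exact_mod_cast hF2
  obtain ⟨z, hz0, hzdist, _, hzuniq⟩ := hensels_lemma hnorm
  simp only [Polynomial.coe_aeval_eq_eval] at hz0 hzdist hzuniq
  rw [hnormF'] at hzdist hzuniq
  -- ‖z - 2‖ ≤ 1/3
  have hzd3 : ‖z - 2‖ ≤ (3 : ℝ)⁻¹ := by
    have hdvd := (PadicInt.norm_lt_one_iff_dvd (z - 2)).1 hzdist
    have := (PadicInt.norm_le_pow_iff_mem_span_pow (z - 2) 1).2
      (by rwa [pow_one, Ideal.mem_span_singleton])
    simpa using this
  refine ⟨(z : ℚ_[3]), ⟨z.2, ?_, ?_⟩, ?_⟩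
  · have : ((z : ℚ_[3]) - 2) = ((z - 2 : ℤ_[3]) : ℚ_[3]) := by
      rw [PadicInt.coe_sub, h2c]
    rw [this, ← PadicInt.norm_def]
    exact hzd3
  · have hz := hFeval z
    rw [hz0] at hz
    have hcast := congrArg (fun t : ℤ_[3] => (t : ℚ_[3])) hz.symm
    push_cast at hcast
    rw [h2c] at hcast
    linear_combination hcast
  · rintro x ⟨hx1, hx2, hx3⟩
    set w : ℤ_[3] := ⟨x, hx1⟩ with hwdef
    have hwF : F.eval w = 0 := by
      rw [hFeval]
      apply Subtype.coe_injective
      push_cast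
      rw [h2c]
      exact hx3
    have hwd : ‖w - 2‖ < 1 := by
      have hw2 : ((w - 2 : ℤ_[3]) : ℚ_[3]) = x - 2 := by
        rw [PadicInt.coe_sub, h2c]
      have : ‖w - 2‖ = ‖x - 2‖ := by rw [PadicInt.norm_def, hw2]
      rw [this]
      calc ‖x - 2‖ ≤ (3 : ℝ)⁻¹ := hx2
      _ < 1 := by norm_num
    exact congrArg Subtype.val (hzuniq w hwF hwd)
end

section
/- Let θ ∈ ℚ_3 with |θ|_3 = 1 and θ ≡ 10 (mod 27), and suppose 12θ³ - 4θ + 1 = 0. Then 1 - 7θ² ≡ 3 (mod 27), and consequently there is no square root of 1 - 7θ² in ℚ_3. -/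
theorem no_sqrt_one_sub_seven_theta_sq (θ : ℚ_[3]) (hθ : ‖θ‖ = 1)
    (hθ10 : ‖θ - 10‖ ≤ (3 : ℝ) ^ (-3 : ℤ))
    (hroot : 12 * θ ^ 3 - 4 * θ + 1 = 0) :
    ‖(1 - 7 * θ ^ 2) - 3‖ ≤ (3 : ℝ) ^ (-3 : ℤ) ∧
      ¬ ∃ x : ℚ_[3], x ^ 2 = 1 - 7 * θ ^ 2 := by
  have h10 : ‖(θ + 10 : ℚ_[3])‖ ≤ 1 := by
    refine le_trans (Padic.nonarchimedean _ _) (max_le (le_of_eq hθ) ?_)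
    have := Padic.norm_int_le_one (p := 3) (10 : ℤ)
    simpa using this
  have h7 : ‖(7 : ℚ_[3])‖ ≤ 1 := by
    have := Padic.norm_int_le_one (p := 3) (7 : ℤ)
    simpa using this
  have h702 : ‖(702 : ℚ_[3])‖ ≤ (3 : ℝ) ^ (-3 : ℤ) := by
    have h27 : ‖((3 : ℚ_[3]) ^ 3)‖ = (3 : ℝ) ^ (-3 : ℤ) := by
      have := Padic.norm_p_pow (p := 3) 3
      simpa using this
    have h26 : ‖(26 : ℚ_[3])‖ ≤ 1 := by
      have := Padic.norm_int_le_one (p := 3) (26 : ℤ)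
      simpa using this
    have : (702 : ℚ_[3]) = (3 : ℚ_[3]) ^ 3 * 26 := by norm_num
    rw [this, norm_mul, h27]
    calc (3 : ℝ) ^ (-3 : ℤ) * ‖(26 : ℚ_[3])‖ ≤ (3 : ℝ) ^ (-3 : ℤ) * 1 := by
          apply mul_le_mul_of_nonneg_left h26 (by positivity)
      _ = (3 : ℝ) ^ (-3 : ℤ) := mul_one _
  have key : ‖(1 - 7 * θ ^ 2) - 3‖ ≤ (3 : ℝ) ^ (-3 : ℤ) := by
    have hid : (1 - 7 * θ ^ 2) - 3 = (-7) * (θ - 10) * (θ + 10) + (-702) := by ring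
    rw [hid]
    refine le_trans (Padic.nonarchimedean _ _) (max_le ?_ ?_)
    · rw [norm_mul, norm_mul, norm_neg]
      calc ‖(7 : ℚ_[3])‖ * ‖θ - 10‖ * ‖θ + 10‖
          ≤ 1 * ((3 : ℝ) ^ (-3 : ℤ)) * 1 := by
            apply mul_le_mul (mul_le_mul h7 hθ10 (norm_nonneg _) zero_le_one) h10
              (norm_nonneg _) (by positivity)
      _ = (3 : ℝ) ^ (-3 : ℤ) := by ring
    · simpa using h702
  refine ⟨key, ?_⟩
  have hnorm3 : ‖(3 : ℚ_[3])‖ = (3 : ℝ) ^ (-1 : ℤ) := by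
    have := Padic.norm_p (p := 3)
    simpa using this
  have hlt : ‖(1 - 7 * θ ^ 2) - 3‖ ≠ ‖(3 : ℚ_[3])‖ := by
    rw [hnorm3]
    have : ((3 : ℝ) ^ (-3 : ℤ)) < (3 : ℝ) ^ (-1 : ℤ) := by
      apply zpow_lt_zpow_right₀ (by norm_num) (by norm_num)
    exact ne_of_lt (lt_of_le_of_lt key this)
  have hnorm : ‖(1 - 7 * θ ^ 2)‖ = (3 : ℝ) ^ (-1 : ℤ) := by
    have : (1 - 7 * θ ^ 2) = ((1 - 7 * θ ^ 2) - 3) + 3 := by ring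
    rw [this, Padic.add_eq_max_of_ne hlt, hnorm3]
    rw [max_eq_right]
    exact le_of_lt (lt_of_le_of_lt key (by
      apply zpow_lt_zpow_right₀ (by norm_num) (by norm_num)))
  rintro ⟨x, hx⟩
  have hu0 : (1 - 7 * θ ^ 2) ≠ 0 := by
    intro h
    rw [h, norm_zero] at hnorm
    have : (0 : ℝ) < (3 : ℝ) ^ (-1 : ℤ) := by positivity
    linarith [this, hnorm.symm]
  have hx0 : x ≠ 0 := by
    intro h; apply hu0; rw [← hx, h]; ring
  have hval : ‖x‖ = (3 : ℝ) ^ (-x.valuation) := Padic.norm_eq_zpow_neg_valuation hx0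
  have : (3 : ℝ) ^ (-2 * x.valuation) = (3 : ℝ) ^ (-1 : ℤ) := by
    rw [← hnorm, ← hx, pow_two, norm_mul, hval, ← zpow_add₀ (by norm_num : (3:ℝ) ≠ 0)]
    ring_nf
  have := zpow_right_injective₀ (by norm_num : (0:ℝ) < 3) (by norm_num : (3:ℝ) ≠ 1) this
  omega
end

section
/- Let p = 3 and θ = 1 + 9(1 + ε) with |ε|_3 < 1, and let √D ∈ ℚ_3 be a square root of D = θ⁴ + 2θ² - 4θ + 1 with √D = 3(1 + ε'), |ε'|_3 < 1. Then |1 - 7θ² + √D|_3 = 1/3, and hence 2(1 - 7θ² + √D) has no square root in ℚ_3. -/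
lemma int_norm_one_of_not_dvd {k : ℤ} (h : ¬ (3:ℤ) ∣ k) : ‖((k:ℤ) : ℚ_[3])‖ = 1 := by
  refine le_antisymm (Padic.norm_int_le_one k) ?_
  by_contra hlt
  push_neg at hlt
  exact h ((Padic.norm_intCast_lt_one_iff (k := k)).mp hlt)

theorem no_sqrt_case_n_one (ε ε' : ℚ_[3]) (hε : ‖ε‖ < 1) (hε' : ‖ε'‖ < 1)
    (θ s : ℚ_[3]) (hθ : θ = 1 + 9 * (1 + ε)) (hs : s = 3 * (1 + ε'))
    (hsD : s ^ 2 = θ ^ 4 + 2 * θ ^ 2 - 4 * θ + 1) :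
    ‖1 - 7 * θ ^ 2 + s‖ = (3 : ℝ)⁻¹ ∧
      ¬ ∃ x : ℚ_[3], x ^ 2 = 2 * (1 - 7 * θ ^ 2 + s) := by
  subst hθ hs
  have h3 : ‖(3 : ℚ_[3])‖ = (3:ℝ)⁻¹ := by
    simpa using (Padic.norm_p (p := 3))
  have hA : (1 - 7 * (1 + 9 * (1 + ε)) ^ 2 + 3 * (1 + ε') : ℚ_[3])
      = -696 + (3 * ε' + (-1260) * ε + (-567) * ε ^ 2) := by ring
  have h696 : ‖(-696 : ℚ_[3])‖ = (3:ℝ)⁻¹ := by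
    have h : (-696 : ℚ_[3]) = 3 * ((-232 : ℤ) : ℚ_[3]) := by push_cast; ring
    rw [h, norm_mul, h3, int_norm_one_of_not_dvd (by decide), mul_one]
  have hr : ‖(3 * ε' + (-1260) * ε + (-567) * ε ^ 2 : ℚ_[3])‖ < (3:ℝ)⁻¹ := by
    have h1 : ‖(3 * ε' : ℚ_[3])‖ < (3:ℝ)⁻¹ := by
      rw [norm_mul, h3]
      nlinarith [norm_nonneg ε']
    have h2 : ‖((-1260) * ε : ℚ_[3])‖ < (3:ℝ)⁻¹ := by
      have h : ((-1260 : ℚ_[3])) = 9 * ((-140 : ℤ) : ℚ_[3]) := by push_cast; ring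
      rw [norm_mul, h, norm_mul]
      have h9 : ‖(9 : ℚ_[3])‖ = (9:ℝ)⁻¹ := by
        have h99 : (9 : ℚ_[3]) = 3 * 3 := by norm_num
        rw [h99, norm_mul, h3]; norm_num
      rw [h9, mul_assoc]
      have h140 : ‖((-140 : ℤ) : ℚ_[3])‖ * ‖ε‖ ≤ 1 :=
        mul_le_one₀ (Padic.norm_int_le_one _) (norm_nonneg _) hε.le
      have := mul_le_of_le_one_right (by norm_num : (0:ℝ) ≤ 9⁻¹) h140
      linarith
    have h3' : ‖((-567) * ε ^ 2 : ℚ_[3])‖ < (3:ℝ)⁻¹ := by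
      have h : ((-567 : ℚ_[3])) = 3 * ((-189 : ℤ) : ℚ_[3]) := by push_cast; ring
      rw [h, norm_mul, norm_mul, h3]
      have h189 : ‖((-189 : ℤ) : ℚ_[3])‖ ≤ 1 := Padic.norm_int_le_one _
      have hε2 : ‖(ε ^ 2 : ℚ_[3])‖ < 1 := by
        rw [pow_two, norm_mul]
        nlinarith [norm_nonneg ε]
      rw [mul_assoc]
      have hlt1 : ‖((-189 : ℤ) : ℚ_[3])‖ * ‖ε ^ 2‖ < 1 := by
        nlinarith [norm_nonneg (((-189 : ℤ) : ℚ_[3])), norm_nonneg (ε ^ 2)]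
      exact mul_lt_of_lt_one_right (by norm_num) hlt1
    calc ‖(3 * ε' + (-1260) * ε + (-567) * ε ^ 2 : ℚ_[3])‖
        ≤ max ‖(3 * ε' + (-1260) * ε : ℚ_[3])‖ ‖((-567) * ε ^ 2 : ℚ_[3])‖ :=
          Padic.nonarchimedean _ _
      _ ≤ max (max ‖(3 * ε' : ℚ_[3])‖ ‖((-1260) * ε : ℚ_[3])‖) ‖((-567) * ε ^ 2 : ℚ_[3])‖ :=
          max_le_max (Padic.nonarchimedean _ _) le_rfl
      _ < (3:ℝ)⁻¹ := by
          simp only [max_lt_iff]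
          exact ⟨⟨h1, h2⟩, h3'⟩
  have hnormA : ‖(1 - 7 * (1 + 9 * (1 + ε)) ^ 2 + 3 * (1 + ε') : ℚ_[3])‖ = (3:ℝ)⁻¹ := by
    rw [hA, Padic.add_eq_max_of_ne (by rw [h696]; exact (ne_of_lt hr).symm), h696,
      max_eq_left hr.le]
  refine ⟨hnormA, ?_⟩
  rintro ⟨x, hx⟩
  have h2n : ‖(2 : ℚ_[3])‖ = 1 := by
    have h : (2 : ℚ_[3]) = ((2 : ℤ) : ℚ_[3]) := by push_cast; ring
    rw [h, int_norm_one_of_not_dvd (by decide)]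
  have hxn : ‖x‖ ^ 2 = (3:ℝ)⁻¹ := by
    rw [← norm_pow, hx, norm_mul, h2n, hnormA, one_mul]
  have hx0 : x ≠ 0 := by
    intro h0
    rw [h0] at hxn
    norm_num at hxn
  rw [Padic.norm_eq_zpow_neg_valuation hx0] at hxn
  push_cast at hxn
  have hval : (3:ℝ) ^ (-x.valuation * 2) = (3:ℝ) ^ (-1 : ℤ) := by
    rw [zpow_mul, show ((2:ℤ)) = ((2:ℕ):ℤ) from rfl, zpow_natCast, hxn]
    norm_num
  have := zpow_right_injective₀ (by norm_num : (0:ℝ) < 3) (by norm_num) hval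
  omega
end

section
/- Let p be a prime with p ∤ (m+1), k ≥ 1. Define F_i : E_p^m → ℚ_p for i = 0,...,m-1 by F_i(z) = (∑_{j=0}^{m-1} θ^{|i-j|} z_j + θ^{m-i})/(∑_{j=0}^{m-1} θ^{m-j} z_j + 1), where θ ∈ E_p and |i-j| is the usual absolute value of the integer i-j. Then the map G : E_p^m → E_p^m, G(z)_i = (F_i(z))^k, has a unique fixed point in E_p^m. -/
namespace UniqueTI

variable {p : ℕ} [Fact p.Prime]

lemma norm_sum_le {ι : Type*} (s : Finset ι) (f : ι → ℚ_[p]) {c : ℝ}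
    (hc : 0 ≤ c) (h : ∀ i ∈ s, ‖f i‖ ≤ c) : ‖∑ i ∈ s, f i‖ ≤ c := by
  classical
  induction s using Finset.induction_on with
  | empty => simpa using hc
  | @insert a s ha ih =>
    rw [Finset.sum_insert ha]
    exact le_trans (Padic.nonarchimedean _ _)
      (max_le (h a (Finset.mem_insert_self a s))
        (ih fun i hi => h i (Finset.mem_insert_of_mem hi)))

lemma norm_sum_lt {ι : Type*} (s : Finset ι) (f : ι → ℚ_[p]) {c : ℝ}
    (hc : 0 < c) (h : ∀ i ∈ s, ‖f i‖ < c) : ‖∑ i ∈ s, f i‖ < c := by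
  classical
  induction s using Finset.induction_on with
  | empty => simpa using hc
  | @insert a s ha ih =>
    rw [Finset.sum_insert ha]
    exact lt_of_le_of_lt (Padic.nonarchimedean _ _)
      (max_lt (h a (Finset.mem_insert_self a s))
        (ih fun i hi => h i (Finset.mem_insert_of_mem hi)))

lemma norm_eq_one_of_sub_lt {x y : ℚ_[p]} (hy : ‖y‖ = 1) (h : ‖x - y‖ < 1) : ‖x‖ = 1 := by
  have hne : ‖x - y‖ ≠ ‖y‖ := by rw [hy]; exact ne_of_lt h
  have hx : x = (x - y) + y := by ring
  rw [hx, Padic.add_eq_max_of_ne hne, hy]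
  exact max_eq_right h.le

lemma norm_pow_sub_one {x : ℚ_[p]} (hx : ‖x‖ ≤ 1) (n : ℕ) : ‖x ^ n - 1‖ ≤ ‖x - 1‖ := by
  induction n with
  | zero => simpa using norm_nonneg _
  | succ n ih =>
    have h : x ^ (n + 1) - 1 = x ^ n * (x - 1) + (x ^ n - 1) := by ring
    rw [h]
    refine le_trans (Padic.nonarchimedean _ _) (max_le ?_ ih)
    calc ‖x ^ n * (x - 1)‖ = ‖x‖ ^ n * ‖x - 1‖ := by rw [norm_mul, norm_pow]
      _ ≤ 1 * ‖x - 1‖ :=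
        mul_le_mul_of_nonneg_right (pow_le_one₀ (norm_nonneg x) hx) (norm_nonneg _)
      _ = ‖x - 1‖ := one_mul _

lemma norm_pow_sub_pow {θ : ℚ_[p]} (hθ : ‖θ‖ = 1) (s t : ℕ) :
    ‖θ ^ s - θ ^ t‖ ≤ ‖θ - 1‖ := by
  have key : ∀ s t : ℕ, s ≤ t → ‖θ ^ s - θ ^ t‖ ≤ ‖θ - 1‖ := by
    intro s t h
    have h1 : θ ^ s * (θ ^ (t - s) - 1) = θ ^ t - θ ^ s := by
      rw [mul_sub, mul_one, ← pow_add, Nat.add_sub_cancel' h]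
    rw [norm_sub_rev, ← h1, norm_mul, norm_pow, hθ, one_pow, one_mul]
    exact norm_pow_sub_one hθ.le _
  rcases le_total s t with h | h
  · exact key s t h
  · rw [norm_sub_rev]; exact key t s h

variable (θ : ℚ_[p]) (m : ℕ)

noncomputable def Nf (i : Fin m) (z : Fin m → ℚ_[p]) : ℚ_[p] :=
  (∑ j : Fin m, θ ^ ((i : ℤ) - (j : ℤ)).natAbs * z j) + θ ^ (m - (i : ℕ))

noncomputable def Df (z : Fin m → ℚ_[p]) : ℚ_[p] :=
  (∑ j : Fin m, θ ^ (m - (j : ℕ)) * z j) + 1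

variable {θ m}

section Norms

variable (hθn : ‖θ‖ = 1) (hθ1 : ‖θ - 1‖ < 1)
include hθn hθ1

lemma term_bound {z : Fin m → ℚ_[p]} (hz : ∀ j, ‖z j - 1‖ < 1) (a : ℕ) (j : Fin m) :
    ‖θ ^ a * z j - 1‖ < 1 := by
  have h : θ ^ a * z j - 1 = θ ^ a * (z j - 1) + (θ ^ a - 1) := by ring
  rw [h]
  refine lt_of_le_of_lt (Padic.nonarchimedean _ _) (max_lt ?_ ?_)
  · rw [norm_mul, norm_pow, hθn, one_pow, one_mul]; exact hz j
  · exact lt_of_le_of_lt (by simpa using norm_pow_sub_one hθn.le a) hθ1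

lemma D_sub_lt {z : Fin m → ℚ_[p]} (hz : ∀ j, ‖z j - 1‖ < 1) :
    ‖Df θ m z - ((m : ℚ_[p]) + 1)‖ < 1 := by
  have h : Df θ m z - ((m : ℚ_[p]) + 1) = ∑ j : Fin m, (θ ^ (m - (j : ℕ)) * z j - 1) := by
    rw [Finset.sum_sub_distrib, Finset.sum_const, Finset.card_univ, Fintype.card_fin,
      nsmul_eq_mul, mul_one, Df]
    ring
  rw [h]
  exact norm_sum_lt _ _ one_pos fun j _ => term_bound hθn hθ1 hz _ j

lemma N_sub_lt {z : Fin m → ℚ_[p]} (hz : ∀ j, ‖z j - 1‖ < 1) (i : Fin m) :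
    ‖Nf θ m i z - ((m : ℚ_[p]) + 1)‖ < 1 := by
  have h : Nf θ m i z - ((m : ℚ_[p]) + 1) =
      (∑ j : Fin m, (θ ^ ((i : ℤ) - (j : ℤ)).natAbs * z j - 1)) + (θ ^ (m - (i : ℕ)) - 1) := by
    rw [Finset.sum_sub_distrib, Finset.sum_const, Finset.card_univ, Fintype.card_fin,
      nsmul_eq_mul, mul_one, Nf]
    ring
  rw [h]
  refine lt_of_le_of_lt (Padic.nonarchimedean _ _) (max_lt ?_ ?_)
  · exact norm_sum_lt _ _ one_pos fun j _ => term_bound hθn hθ1 hz _ j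
  · exact lt_of_le_of_lt (by simpa using norm_pow_sub_one hθn.le (m - (i : ℕ))) hθ1

end Norms

lemma m1_norm {m : ℕ} (hpm : ¬ p ∣ (m + 1)) : ‖((m : ℚ_[p]) + 1)‖ = 1 := by
  have h1 : ((m : ℚ_[p]) + 1) = (((m : ℤ) + 1 : ℤ) : ℚ_[p]) := by push_cast; ring
  rw [h1]
  refine le_antisymm (Padic.norm_int_le_one _) ?_
  by_contra h
  push_neg at h
  rw [Padic.norm_intCast_lt_one_iff] at h
  exact hpm (by exact_mod_cast h)

section Main

variable (hθn : ‖θ‖ = 1) (hθ1 : ‖θ - 1‖ < 1) (hpm : ¬ p ∣ (m + 1))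
include hθn hθ1 hpm

lemma D_norm {z : Fin m → ℚ_[p]} (hz : ∀ j, ‖z j - 1‖ < 1) : ‖Df θ m z‖ = 1 :=
  norm_eq_one_of_sub_lt (m1_norm hpm) (D_sub_lt hθn hθ1 hz)

lemma N_norm {z : Fin m → ℚ_[p]} (hz : ∀ j, ‖z j - 1‖ < 1) (i : Fin m) : ‖Nf θ m i z‖ = 1 :=
  norm_eq_one_of_sub_lt (m1_norm hpm) (N_sub_lt hθn hθ1 hz i)

lemma ND_sub {z : Fin m → ℚ_[p]} (hz : ∀ j, ‖z j - 1‖ < 1) (i : Fin m) :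
    ‖Nf θ m i z - Df θ m z‖ ≤ ‖θ - 1‖ := by
  have h : Nf θ m i z - Df θ m z =
      (∑ j : Fin m, (θ ^ ((i : ℤ) - (j : ℤ)).natAbs - θ ^ (m - (j : ℕ))) * z j) +
        (θ ^ (m - (i : ℕ)) - 1) := by
    rw [Nf, Df,
      show (∑ j : Fin m, (θ ^ ((i : ℤ) - (j : ℤ)).natAbs - θ ^ (m - (j : ℕ))) * z j) =
        ∑ j : Fin m, (θ ^ ((i : ℤ) - (j : ℤ)).natAbs * z j - θ ^ (m - (j : ℕ)) * z j) from
        Finset.sum_congr rfl fun j _ => by ring,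
      Finset.sum_sub_distrib]
    ring
  rw [h]
  refine le_trans (Padic.nonarchimedean _ _) (max_le ?_ ?_)
  · refine norm_sum_le _ _ (norm_nonneg _) fun j _ => ?_
    rw [norm_mul, norm_eq_one_of_sub_lt norm_one (hz j), mul_one]
    exact norm_pow_sub_pow hθn _ _
  · simpa using norm_pow_sub_one hθn.le (m - (i : ℕ))

lemma F_sub {z : Fin m → ℚ_[p]} (hz : ∀ j, ‖z j - 1‖ < 1) (i : Fin m) :
    ‖Nf θ m i z / Df θ m z - 1‖ ≤ ‖θ - 1‖ := by
  have hD : ‖Df θ m z‖ = 1 := D_norm hθn hθ1 hpm hz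
  have hD0 : Df θ m z ≠ 0 := by intro h; rw [h] at hD; simp at hD
  have h : Nf θ m i z / Df θ m z - 1 = (Nf θ m i z - Df θ m z) / Df θ m z := by
    field_simp
  rw [h, norm_div, hD, div_one]
  exact ND_sub hθn hθ1 hpm hz i

lemma F_norm {z : Fin m → ℚ_[p]} (hz : ∀ j, ‖z j - 1‖ < 1) (i : Fin m) :
    ‖Nf θ m i z / Df θ m z‖ = 1 :=
  norm_eq_one_of_sub_lt norm_one (lt_of_le_of_lt (F_sub hθn hθ1 hpm hz i) hθ1)

lemma Fk_sub {z : Fin m → ℚ_[p]} (hz : ∀ j, ‖z j - 1‖ < 1) (i : Fin m) (k : ℕ) :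
    ‖(Nf θ m i z / Df θ m z) ^ k - 1‖ ≤ ‖θ - 1‖ :=
  le_trans (norm_pow_sub_one (F_norm hθn hθ1 hpm hz i).le k) (F_sub hθn hθ1 hpm hz i)

end Main

/-- The antisymmetrized key identity. -/
lemma key_ident (i : Fin m) (z w : Fin m → ℚ_[p]) :
    Nf θ m i z * Df θ m w - Nf θ m i w * Df θ m z =
      (∑ j : Fin m, ∑ l : Fin m,
        (θ ^ (((i : ℤ) - (j : ℤ)).natAbs + (m - (l : ℕ))) -
          θ ^ (((i : ℤ) - (l : ℤ)).natAbs + (m - (j : ℕ)))) * (z j - w j) * w l) +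
      ∑ j : Fin m, (θ ^ ((i : ℤ) - (j : ℤ)).natAbs -
        θ ^ ((m - (i : ℕ)) + (m - (j : ℕ)))) * (z j - w j) := by
  set a : Fin m → ℚ_[p] := fun j => θ ^ ((i : ℤ) - (j : ℤ)).natAbs with ha
  set b : Fin m → ℚ_[p] := fun j => θ ^ (m - (j : ℕ)) with hb
  set c : ℚ_[p] := θ ^ (m - (i : ℕ)) with hc
  set u : Fin m → ℚ_[p] := fun j => z j - w j with hu
  have hA : (∑ j : Fin m, a j * z j) = (∑ j : Fin m, a j * u j) + ∑ j : Fin m, a j * w j := by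
    rw [← Finset.sum_add_distrib]
    exact Finset.sum_congr rfl fun j _ => by simp [hu]; ring
  have hB : (∑ j : Fin m, b j * z j) = (∑ j : Fin m, b j * u j) + ∑ j : Fin m, b j * w j := by
    rw [← Finset.sum_add_distrib]
    exact Finset.sum_congr rfl fun j _ => by simp [hu]; ring
  have h1 : (∑ j : Fin m, a j * u j) * (∑ l : Fin m, b l * w l) =
      ∑ j : Fin m, ∑ l : Fin m, (a j * u j) * (b l * w l) := Finset.sum_mul_sum _ _ _ _
  have h2 : (∑ j : Fin m, a j * w j) * (∑ l : Fin m, b l * u l) =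
      ∑ j : Fin m, ∑ l : Fin m, (a l * w l) * (b j * u j) := by
    rw [Finset.sum_mul_sum]
    exact Finset.sum_comm
  have hAB : (∑ j : Fin m, ∑ l : Fin m,
      (θ ^ (((i : ℤ) - (j : ℤ)).natAbs + (m - (l : ℕ))) -
        θ ^ (((i : ℤ) - (l : ℤ)).natAbs + (m - (j : ℕ)))) * (z j - w j) * w l) =
      (∑ j : Fin m, a j * u j) * (∑ l : Fin m, b l * w l) -
        (∑ j : Fin m, a j * w j) * (∑ l : Fin m, b l * u l) := by
    rw [h1, h2, ← Finset.sum_sub_distrib]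
    refine Finset.sum_congr rfl fun j _ => ?_
    rw [← Finset.sum_sub_distrib]
    refine Finset.sum_congr rfl fun l _ => ?_
    simp only [ha, hb, hu, pow_add]
    ring
  have hC : (∑ j : Fin m, (θ ^ ((i : ℤ) - (j : ℤ)).natAbs -
      θ ^ ((m - (i : ℕ)) + (m - (j : ℕ)))) * (z j - w j)) =
      (∑ j : Fin m, a j * u j) - c * (∑ j : Fin m, b j * u j) := by
    rw [Finset.mul_sum, ← Finset.sum_sub_distrib]
    refine Finset.sum_congr rfl fun j _ => ?_
    simp only [ha, hb, hc, hu, pow_add]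
    ring
  rw [hAB, hC]
  show (∑ j : Fin m, a j * z j + c) * (∑ j : Fin m, b j * w j + 1) -
      (∑ j : Fin m, a j * w j + c) * (∑ j : Fin m, b j * z j + 1) = _
  rw [hA, hB]
  ring

lemma key_bound (hθn : ‖θ‖ = 1) {z w : Fin m → ℚ_[p]}
    (hw : ∀ j, ‖w j - 1‖ < 1) (i : Fin m) :
    ‖Nf θ m i z * Df θ m w - Nf θ m i w * Df θ m z‖ ≤ ‖θ - 1‖ * ‖z - w‖ := by
  have hC : (0:ℝ) ≤ ‖θ - 1‖ * ‖z - w‖ := mul_nonneg (norm_nonneg _) (norm_nonneg _)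
  have hzw : ∀ j : Fin m, ‖z j - w j‖ ≤ ‖z - w‖ := fun j => by
    simpa using norm_le_pi_norm (z - w) j
  rw [key_ident]
  refine le_trans (Padic.nonarchimedean _ _) (max_le ?_ ?_)
  · refine norm_sum_le _ _ hC fun j _ => ?_
    refine norm_sum_le _ _ hC fun l _ => ?_
    rw [norm_mul, norm_mul, norm_eq_one_of_sub_lt norm_one (hw l), mul_one]
    exact mul_le_mul (norm_pow_sub_pow hθn _ _) (hzw j) (norm_nonneg _) (norm_nonneg _)
  · refine norm_sum_le _ _ hC fun j _ => ?_
    rw [norm_mul]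
    exact mul_le_mul (norm_pow_sub_pow hθn _ _) (hzw j) (norm_nonneg _) (norm_nonneg _)

lemma F_lip (hθn : ‖θ‖ = 1) (hθ1 : ‖θ - 1‖ < 1) (hpm : ¬ p ∣ (m + 1))
    {z w : Fin m → ℚ_[p]} (hz : ∀ j, ‖z j - 1‖ < 1) (hw : ∀ j, ‖w j - 1‖ < 1) (i : Fin m) :
    ‖Nf θ m i z / Df θ m z - Nf θ m i w / Df θ m w‖ ≤ ‖θ - 1‖ * ‖z - w‖ := by
  have hDz : ‖Df θ m z‖ = 1 := D_norm hθn hθ1 hpm hz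
  have hDw : ‖Df θ m w‖ = 1 := D_norm hθn hθ1 hpm hw
  have hDz0 : Df θ m z ≠ 0 := by intro h; rw [h] at hDz; simp at hDz
  have hDw0 : Df θ m w ≠ 0 := by intro h; rw [h] at hDw; simp at hDw
  have h : Nf θ m i z / Df θ m z - Nf θ m i w / Df θ m w =
      (Nf θ m i z * Df θ m w - Nf θ m i w * Df θ m z) / (Df θ m z * Df θ m w) := by
    field_simp
  rw [h, norm_div, norm_mul, hDz, hDw, mul_one, div_one]
  exact key_bound hθn hw i

lemma G_lip (hθn : ‖θ‖ = 1) (hθ1 : ‖θ - 1‖ < 1) (hpm : ¬ p ∣ (m + 1))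
    {z w : Fin m → ℚ_[p]} (hz : ∀ j, ‖z j - 1‖ < 1) (hw : ∀ j, ‖w j - 1‖ < 1) (i : Fin m)
    (k : ℕ) :
    ‖(Nf θ m i z / Df θ m z) ^ k - (Nf θ m i w / Df θ m w) ^ k‖ ≤ ‖θ - 1‖ * ‖z - w‖ := by
  set x := Nf θ m i z / Df θ m z with hx
  set y := Nf θ m i w / Df θ m w with hy
  have hxn : ‖x‖ = 1 := F_norm hθn hθ1 hpm hz i
  have hyn : ‖y‖ = 1 := F_norm hθn hθ1 hpm hw i
  have hgeom : (∑ t ∈ Finset.range k, x ^ t * y ^ (k - 1 - t)) * (x - y) = x ^ k - y ^ k :=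
    geom_sum₂_mul x y k
  rw [← hgeom, norm_mul]
  have h1 : ‖∑ t ∈ Finset.range k, x ^ t * y ^ (k - 1 - t)‖ ≤ 1 := by
    refine norm_sum_le _ _ zero_le_one fun t _ => ?_
    rw [norm_mul, norm_pow, norm_pow, hxn, hyn, one_pow, one_pow, mul_one]
  calc ‖∑ t ∈ Finset.range k, x ^ t * y ^ (k - 1 - t)‖ * ‖x - y‖
      ≤ 1 * (‖θ - 1‖ * ‖z - w‖) :=
        mul_le_mul h1 (F_lip hθn hθ1 hpm hz hw i) (norm_nonneg _) zero_le_one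
    _ = ‖θ - 1‖ * ‖z - w‖ := one_mul _

end UniqueTI

open UniqueTI in
theorem unique_ti_solution (p : ℕ) [Fact p.Prime] (m : ℕ) (hm : 1 ≤ m)
    (hpm : ¬ p ∣ (m + 1)) (k : ℕ) (hk : 1 ≤ k) (θ : ℚ_[p]) (hθ : IsEp p θ) :
    ∃! z : Fin m → ℚ_[p], (∀ i, IsEp p (z i)) ∧
      ∀ i : Fin m, z i =
        (((∑ j : Fin m, θ ^ ((i : ℤ) - (j : ℤ)).natAbs * z j) + θ ^ (m - (i : ℕ))) /
          ((∑ j : Fin m, θ ^ (m - (j : ℕ)) * z j) + 1)) ^ k := by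
  obtain ⟨hθn, hθε⟩ := hθ
  have hp1 : (1 : ℝ) < p := by exact_mod_cast (Fact.out : p.Prime).one_lt
  have hε1 : (p : ℝ) ^ (-(1 : ℝ) / ((p : ℝ) - 1)) < 1 :=
    Real.rpow_lt_one_of_one_lt_of_neg hp1
      (div_neg_of_neg_of_pos (by norm_num) (by linarith))
  have hθ1 : ‖θ - 1‖ < 1 := hθε.trans hε1
  set T : Set (Fin m → ℚ_[p]) := {z | ∀ j, ‖z j - 1‖ ≤ ‖θ - 1‖} with hTdef
  have hTlt : ∀ z ∈ T, ∀ j, ‖z j - 1‖ < 1 := fun z hz j => lt_of_le_of_lt (hz j) hθ1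
  have hTclosed : IsClosed T := by
    have hT2 : T = ⋂ j, {z : Fin m → ℚ_[p] | ‖z j - 1‖ ≤ ‖θ - 1‖} := by
      ext z; simp [hTdef, Set.mem_iInter]
    rw [hT2]
    exact isClosed_iInter fun j =>
      isClosed_le (Continuous.norm ((continuous_apply j).sub continuous_const))
        continuous_const
  haveI : CompleteSpace T := hTclosed.completeSpace_coe
  haveI : Nonempty T := ⟨⟨fun _ => 1, fun j => by simp⟩⟩
  set G : T → T := fun z => ⟨fun i => (Nf θ m i z.1 / Df θ m z.1) ^ k,
    fun i => Fk_sub hθn hθ1 hpm (hTlt z.1 z.2) i k⟩ with hGdef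
  have hlip : LipschitzWith ‖θ - 1‖₊ G := by
    apply LipschitzWith.of_dist_le_mul
    intro x y
    rw [Subtype.dist_eq]
    have hc : (0 : ℝ) ≤ (‖θ - 1‖₊ : ℝ) * dist x y := mul_nonneg (by positivity) dist_nonneg
    refine (dist_pi_le_iff hc).2 fun i => ?_
    rw [dist_eq_norm]
    show ‖(Nf θ m i x.1 / Df θ m x.1) ^ k - (Nf θ m i y.1 / Df θ m y.1) ^ k‖ ≤ _
    have h := G_lip hθn hθ1 hpm (hTlt x.1 x.2) (hTlt y.1 y.2) i k
    have hd : dist x y = ‖x.1 - y.1‖ := by rw [Subtype.dist_eq, dist_eq_norm]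
    rw [hd, coe_nnnorm]
    exact h
  have hcontr : ContractingWith ‖θ - 1‖₊ G := ⟨by exact_mod_cast hθ1, hlip⟩
  set x₀ : T := ContractingWith.fixedPoint G hcontr with hx₀
  have hfix : G x₀ = x₀ := hcontr.fixedPoint_isFixedPt
  refine ⟨x₀.1, ⟨fun i => ?_, fun i => ?_⟩, ?_⟩
  · have h1 : ‖x₀.1 i - 1‖ ≤ ‖θ - 1‖ := x₀.2 i
    exact ⟨norm_eq_one_of_sub_lt norm_one (lt_of_le_of_lt h1 hθ1), lt_of_le_of_lt h1 hθε⟩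
  · show x₀.1 i = (Nf θ m i x₀.1 / Df θ m x₀.1) ^ k
    exact (congrFun (congrArg Subtype.val hfix) i).symm
  · rintro w ⟨hw1, hw2⟩
    have hwlt : ∀ j, ‖w j - 1‖ < 1 := fun j => (hw1 j).2.trans hε1
    have hwT : w ∈ T := by
      intro j
      rw [hw2 j]
      exact Fk_sub hθn hθ1 hpm hwlt j k
    have hwfix : G ⟨w, hwT⟩ = ⟨w, hwT⟩ := Subtype.ext (funext fun i => (hw2 i).symm)
    exact congrArg Subtype.val (hcontr.fixedPoint_unique hwfix)
end
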